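/- arXiv:0909.2811 — 6 statements merged into one kernel-verified Lean document; each statement's English description precedes it below -/
import Mathlib

section
/- If y₁ and y₂ are k-free positive integers and their product y₁·y₂ is a perfect k-th power, then the radical of y₁ equals the radical of y₂, and this common radical equals (y₁·y₂)^{1/k}. -/
/-- The radical of a positive integer: the product of its distinct prime divisors. -/
def radical (n : ℕ) : ℕ := ∏ p ∈ n.primeFactors, p

theorem radical_eq_of_kfree_mul_kth_power (k : ℕ) (hk : 2 ≤ k) (y₁ y₂ : ℕ)
    (hy₁ : 0 < y₁) (hy₂ : 0 < y₂)
    (hfree₁ : ∀ p : ℕ, p.Prime → ¬ p ^ k ∣ y₁)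
    (hfree₂ : ∀ p : ℕ, p.Prime → ¬ p ^ k ∣ y₂)
    (hpow : ∃ n : ℕ, 0 < n ∧ y₁ * y₂ = n ^ k) :
    radical y₁ = radical y₂ ∧ (radical y₁) ^ k = y₁ * y₂ := by
  obtain ⟨n, hn, hnk⟩ := hpow
  have hy₁' := hy₁.ne'
  have hy₂' := hy₂.ne'
  -- key valuation facts
  have key : ∀ p : ℕ, p.Prime →
      (y₁.factorization p + y₂.factorization p = 0 ∨
       y₁.factorization p + y₂.factorization p = k) := by
    intro p hp
    have ha : y₁.factorization p < k := by
      have := hfree₁ p hp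
      rw [hp.pow_dvd_iff_le_factorization hy₁'] at this
      omega
    have hb : y₂.factorization p < k := by
      have := hfree₂ p hp
      rw [hp.pow_dvd_iff_le_factorization hy₂'] at this
      omega
    have hab : y₁.factorization p + y₂.factorization p = k * n.factorization p := by
      have := congrArg (fun m => m.factorization p) hnk
      simpa [Nat.factorization_mul hy₁' hy₂', Nat.factorization_pow] using this
    rcases Nat.eq_zero_or_pos (n.factorization p) with h0 | h1
    · left
      rw [h0, mul_zero] at hab
      omega
    · right
      have hm2 : n.factorization p < 2 := by
        by_contra hge
        push_neg at hge
        have : k * 2 ≤ k * n.factorization p := Nat.mul_le_mul_left k hge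
        omega
      have hm1 : n.factorization p = 1 := by omega
      rw [hm1, mul_one] at hab
      exact hab
  have hmem : ∀ p : ℕ, p ∈ y₁.primeFactors ↔ p ∈ y₂.primeFactors := by
    intro p
    by_cases hp : p.Prime
    · rw [Nat.mem_primeFactors, Nat.mem_primeFactors,
        hp.dvd_iff_one_le_factorization hy₁', hp.dvd_iff_one_le_factorization hy₂']
      simp only [and_iff_left hy₁', and_iff_left hy₂', and_iff_right hp]
      rcases key p hp with h | h
      · constructor <;> intro h' <;> omega
      · have ha : y₁.factorization p < k := by
          have := hfree₁ p hp
          rw [hp.pow_dvd_iff_le_factorization hy₁'] at this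
          omega
        have hb : y₂.factorization p < k := by
          have := hfree₂ p hp
          rw [hp.pow_dvd_iff_le_factorization hy₂'] at this
          omega
        constructor <;> intro h' <;> omega
    · simp [Nat.mem_primeFactors, hp]
  have heq : y₁.primeFactors = y₂.primeFactors := Finset.ext hmem
  have hrad₁ : radical y₁ ≠ 0 := by
    refine Finset.prod_ne_zero_iff.mpr ?_
    intro p hp
    exact (Nat.prime_of_mem_primeFactors hp).ne_zero
  have hradfact : ∀ q : ℕ, (radical y₁).factorization q =
      if q ∈ y₁.primeFactors then 1 else 0 := by
    intro q
    rw [radical, Nat.factorization_prod (fun p hp => (Nat.prime_of_mem_primeFactors hp).ne_zero),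
      Finset.sum_apply']
    have hterm : ∀ p ∈ y₁.primeFactors, (Nat.factorization p) q = if p = q then 1 else 0 :=
      fun p hp => by
        rw [(Nat.prime_of_mem_primeFactors hp).factorization, Finsupp.single_apply]
    rw [Finset.sum_congr rfl hterm, Finset.sum_ite_eq' y₁.primeFactors q (fun _ => 1)]
  refine ⟨by rw [radical, radical, heq], ?_⟩
  have hprod : y₁ * y₂ ≠ 0 := Nat.mul_ne_zero hy₁' hy₂'
  refine Nat.eq_of_factorization_eq (pow_ne_zero k hrad₁) hprod fun p => ?_
  rw [Nat.factorization_pow, Finsupp.smul_apply, smul_eq_mul, hradfact p,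
    Nat.factorization_mul hy₁' hy₂', Finsupp.add_apply]
  by_cases hp : p.Prime
  · rcases key p hp with h | h
    · have h1 : y₁.factorization p = 0 := by omega
      have hnd : ¬ p ∣ y₁ := by
        rw [hp.dvd_iff_one_le_factorization hy₁']
        omega
      have hnot : p ∉ y₁.primeFactors := by
        simp [Nat.mem_primeFactors, hnd]
      simp [hnot]; omega
    · have hpos : 0 < y₁.factorization p := by
        by_contra h0
        push_neg at h0
        have h1 : y₁.factorization p = 0 := by omega
        have hb : y₂.factorization p < k := by
          have := hfree₂ p hp
          rw [hp.pow_dvd_iff_le_factorization hy₂'] at this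
          omega
        omega
      have hin : p ∈ y₁.primeFactors :=
        Nat.mem_primeFactors.mpr ⟨hp, (hp.dvd_iff_one_le_factorization hy₁').mpr hpos, hy₁'⟩
      simp [hin]; omega
  · have h1 : y₁.factorization p = 0 := by
      simp [Nat.factorization_eq_zero_of_not_prime _ hp]
    have h2 : y₂.factorization p = 0 := by
      simp [Nat.factorization_eq_zero_of_not_prime _ hp]
    have hnot : p ∉ y₁.primeFactors := fun h => hp (Nat.prime_of_mem_primeFactors h)
    simp [hnot, h1, h2]
end

section
/- The number of pairs (x₁, x₂) of positive integers with x₁, x₂ ≤ H, gcd(x₁, x₂) = 1, and x₁·x₂ a perfect k-th power equals ζ(2)^{-1} H^{2/k} + O(H^{1/k} log H) as H → ∞. -/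
set_option maxHeartbeats 1000000

open scoped Classical

open Filter ArithmeticFunction Finset
open scoped ArithmeticFunction.Moebius

lemma sum_mu_divisors (n : ℕ) : ∑ d ∈ n.divisors, (μ d : ℝ) = if n = 1 then 1 else 0 := by
  have h := congrArg (fun f : ArithmeticFunction ℝ => f n) (coe_moebius_mul_coe_zeta (R := ℝ))
  simp only [coe_mul_zeta_apply, one_apply, intCoe_apply] at h
  exact h

lemma count_coprime_eq (N : ℕ) :
    ((((Finset.Icc 1 N ×ˢ Finset.Icc 1 N).filter
        (fun p : ℕ × ℕ => Nat.Coprime p.1 p.2)).card : ℝ))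
      = ∑ d ∈ Finset.Icc 1 N, (μ d : ℝ) * ((N / d : ℕ) : ℝ)^2 := by
  classical
  rw [Finset.card_filter]
  push_cast
  have key : ∀ p ∈ Finset.Icc 1 N ×ˢ Finset.Icc 1 N,
      (if Nat.Coprime p.1 p.2 then (1:ℝ) else 0)
        = ∑ d ∈ Finset.Icc 1 N, (if d ∣ p.1 ∧ d ∣ p.2 then (μ d : ℝ) else 0) := by
    rintro ⟨a, b⟩ hp
    simp only [Finset.mem_product, Finset.mem_Icc] at hp
    obtain ⟨⟨ha1, haN⟩, ⟨hb1, hbN⟩⟩ := hp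
    rw [Finset.sum_ite, Finset.sum_const_zero, add_zero]
    have hfe : (Finset.Icc 1 N).filter (fun d => d ∣ a ∧ d ∣ b) = (Nat.gcd a b).divisors := by
      ext d
      simp only [Finset.mem_filter, Finset.mem_Icc, Nat.mem_divisors, Nat.dvd_gcd_iff]
      constructor
      · rintro ⟨_, hd⟩
        exact ⟨hd, Nat.gcd_ne_zero_left (by omega)⟩
      · rintro ⟨⟨hda, hdb⟩, _⟩
        have hd0 : d ≠ 0 := by
          rintro rfl; simp at hda; omega
        exact ⟨⟨by omega, le_trans (Nat.le_of_dvd (by omega) hda) haN⟩, ⟨hda, hdb⟩⟩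
    rw [hfe, sum_mu_divisors]
  rw [Finset.sum_congr rfl key, Finset.sum_comm]
  refine Finset.sum_congr rfl fun d hd => ?_
  rw [Finset.sum_ite, Finset.sum_const_zero, add_zero, Finset.sum_const, nsmul_eq_mul, mul_comm]
  congr 1
  have : (Finset.Icc 1 N ×ˢ Finset.Icc 1 N).filter (fun p : ℕ × ℕ => d ∣ p.1 ∧ d ∣ p.2)
      = ((Finset.Icc 1 N).filter (fun x => d ∣ x)) ×ˢ ((Finset.Icc 1 N).filter (fun x => d ∣ x)) := by
    rw [Finset.filter_product]
  rw [this, Finset.card_product]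
  have h1 : (Finset.Icc 1 N).filter (fun x => d ∣ x) = (Finset.Ioc 0 N).filter (fun x => d ∣ x) := by
    congr 1
  rw [h1, Nat.Ioc_filter_dvd_card_eq_div]
  push_cast
  ring

lemma abs_mu_real_le_one (d : ℕ) : |(μ d : ℝ)| ≤ 1 := by
  have h := abs_moebius_le_one (n := d)
  exact_mod_cast (by exact_mod_cast h : (|(μ d : ℤ)| : ℝ) ≤ 1)

lemma summable_mu_div_sq : Summable (fun d : ℕ => (μ d : ℝ) / (d:ℝ)^2) := by
  apply Summable.of_norm
  refine Summable.of_nonneg_of_le (fun d => norm_nonneg _) (fun d => ?_)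
    (Real.summable_nat_pow_inv.mpr one_lt_two)
  rw [Real.norm_eq_abs, abs_div, abs_of_nonneg (by positivity : (0:ℝ) ≤ (d:ℝ)^2),
    div_eq_mul_inv]
  rcases eq_or_ne d 0 with rfl | hd
  · simp
  nlinarith [abs_mu_real_le_one d, inv_nonneg.mpr (by positivity : (0:ℝ) ≤ (d:ℝ)^2),
    abs_nonneg ((μ d : ℝ))]

lemma tsum_mu_div_sq : ∑' d : ℕ, (μ d : ℝ) / (d:ℝ)^2 = 6 / Real.pi ^ 2 := by
  have hpi : ((Real.pi:ℂ))^2 ≠ 0 := pow_ne_zero 2 (by exact_mod_cast Real.pi_ne_zero)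
  have h1 : LSeries (fun n => (μ n : ℂ)) 2 = 6 / (Real.pi : ℂ)^2 := by
    have h2 := ArithmeticFunction.LSeries_zeta_mul_Lseries_moebius (s := 2) (by norm_num)
    rw [ArithmeticFunction.LSeries_zeta_eq_riemannZeta (by norm_num), riemannZeta_two] at h2
    field_simp at h2
    rw [eq_div_iff hpi]
    linear_combination h2
  have h3 : LSeries (fun n => (μ n : ℂ)) 2 = ((∑' d : ℕ, (μ d : ℝ) / (d:ℝ)^2 : ℝ) : ℂ) := by
    rw [Complex.ofReal_tsum]
    apply tsum_congr
    intro n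
    rw [LSeries.term]
    rcases eq_or_ne n 0 with rfl | hn
    · simp
    · have : (n:ℂ) ^ (2:ℂ) = ((n:ℝ)^2 : ℝ) := by
        rw [show (2:ℂ) = ((2:ℕ):ℂ) by norm_num, Complex.cpow_natCast]
        push_cast; ring
      simp [hn, this]
  rw [h3] at h1
  have hc : ((6 / Real.pi^2 : ℝ) : ℂ) = 6 / (Real.pi:ℂ)^2 := by push_cast; ring
  exact Complex.ofReal_injective (h1.trans hc.symm)

-- tail bound
lemma tail_inv_sq_le (N : ℕ) (hN : 1 ≤ N) :
    ∑' i : ℕ, (((i + (N+1) : ℕ) : ℝ)^2)⁻¹ ≤ (N:ℝ)⁻¹ := by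
  have hsum : Summable (fun i : ℕ => (((i + (N+1) : ℕ) : ℝ)^2)⁻¹) := by
    have := (summable_nat_add_iff (f := fun n : ℕ => ((n:ℝ)^2)⁻¹) (N+1)).mpr
      (Real.summable_nat_pow_inv.mpr one_lt_two)
    simpa using this
  refine Summable.tsum_le_of_sum_le hsum (fun s => ?_)
  obtain ⟨n, hn⟩ := s.exists_nat_subset_range
  have h1 : ∑ i ∈ s, (((i + (N+1) : ℕ) : ℝ)^2)⁻¹
      ≤ ∑ i ∈ range n, (((i + (N+1) : ℕ) : ℝ)^2)⁻¹ :=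
    Finset.sum_le_sum_of_subset_of_nonneg hn (fun i _ _ => by positivity)
  have h2 : ∑ i ∈ range n, (((i + (N+1) : ℕ) : ℝ)^2)⁻¹
      = ∑ j ∈ Finset.Ioc N (N+n), ((j:ℝ)^2)⁻¹ := by
    have hIoc : Finset.Ioc N (N+n) = Finset.Ico (N+1) (N+n+1) := by
      ext x; simp only [Finset.mem_Ioc, Finset.mem_Ico]; omega
    rw [hIoc, Finset.sum_Ico_eq_sum_range]
    have hsub : N + n + 1 - (N + 1) = n := by omega
    rw [hsub]
    exact Finset.sum_congr rfl (fun i _ => by rw [add_comm (N+1) i])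
  rcases Nat.eq_zero_or_pos n with rfl | hn0
  · simp only [Finset.range_zero, Finset.sum_empty] at h1
    exact h1.trans (by positivity)
  · have h3 := sum_Ioc_inv_sq_le_sub (α := ℝ) (k := N) (n := N + n) (by omega) (by omega)
    have h4 : (N:ℝ)⁻¹ - ((N+n:ℕ):ℝ)⁻¹ ≤ (N:ℝ)⁻¹ := by
      have : (0:ℝ) ≤ ((N+n:ℕ):ℝ)⁻¹ := by positivity
      linarith
    calc ∑ i ∈ s, (((i + (N+1) : ℕ) : ℝ)^2)⁻¹ ≤ _ := h1
      _ = _ := h2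
      _ ≤ _ := h3
      _ ≤ _ := h4

lemma harmonic_sum_le (N : ℕ) : ∑ d ∈ Finset.Icc 1 N, ((d:ℝ))⁻¹ ≤ 1 + Real.log N := by
  have he : ∑ d ∈ Finset.Icc 1 N, ((d:ℝ))⁻¹ = (harmonic N : ℝ) := by
    rw [harmonic]
    push_cast
    rw [← Finset.Ico_add_one_right_eq_Icc, Finset.sum_Ico_eq_sum_range]
    refine Finset.sum_congr (by norm_num) (fun i _ => by push_cast; ring)
  rw [he]
  exact harmonic_le_one_add_log N

lemma count_est (N : ℕ) (hN : 1 ≤ N) :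
    |((((Finset.Icc 1 N ×ˢ Finset.Icc 1 N).filter
        (fun p : ℕ × ℕ => Nat.Coprime p.1 p.2)).card : ℝ))
      - 6 / Real.pi ^ 2 * (N:ℝ)^2| ≤ 2*N*(1+Real.log N) + N := by
  rw [count_coprime_eq, ← tsum_mu_div_sq]
  have hsplit := Summable.sum_add_tsum_nat_add (f := fun d : ℕ => (μ d : ℝ) / (d:ℝ)^2) (N+1)
    summable_mu_div_sq
  rw [← hsplit]
  set R := ∑' i : ℕ, (μ (i + (N+1)) : ℝ) / ((i + (N+1) : ℕ):ℝ)^2 with hR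
  have hrange : ∑ d ∈ range (N+1), (μ d : ℝ) / (d:ℝ)^2
      = ∑ d ∈ Finset.Icc 1 N, (μ d : ℝ) / (d:ℝ)^2 := by
    have : range (N+1) = insert 0 (Finset.Icc 1 N) := by
      ext x; simp only [mem_range, mem_insert, mem_Icc]; omega
    rw [this, Finset.sum_insert (by simp)]
    simp
  rw [hrange]
  -- rewrite difference
  have key : ∑ d ∈ Finset.Icc 1 N, (μ d : ℝ) * ((N / d : ℕ) : ℝ)^2
      - (∑ d ∈ Finset.Icc 1 N, (μ d : ℝ) / (d:ℝ)^2 + R) * (N:ℝ)^2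
      = ∑ d ∈ Finset.Icc 1 N, (μ d : ℝ) * (((N / d : ℕ) : ℝ)^2 - (N:ℝ)^2/(d:ℝ)^2)
        - R * (N:ℝ)^2 := by
    rw [add_mul, Finset.sum_mul, sub_add_eq_sub_sub, ← Finset.sum_sub_distrib]
    congr 1
    exact Finset.sum_congr rfl (fun d _ => by ring)
  rw [key]
  have habs : |∑ d ∈ Finset.Icc 1 N, (μ d : ℝ) * (((N / d : ℕ) : ℝ)^2 - (N:ℝ)^2/(d:ℝ)^2)|
      ≤ 2*N*(1+Real.log N) := by
    calc |∑ d ∈ Finset.Icc 1 N, (μ d : ℝ) * (((N / d : ℕ) : ℝ)^2 - (N:ℝ)^2/(d:ℝ)^2)|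
        ≤ ∑ d ∈ Finset.Icc 1 N, |(μ d : ℝ) * (((N / d : ℕ) : ℝ)^2 - (N:ℝ)^2/(d:ℝ)^2)| :=
          Finset.abs_sum_le_sum_abs _ _
      _ ≤ ∑ d ∈ Finset.Icc 1 N, 2*(N:ℝ)*((d:ℝ))⁻¹ := by
          refine Finset.sum_le_sum (fun d hd => ?_)
          simp only [Finset.mem_Icc] at hd
          have hd1 : (1:ℝ) ≤ (d:ℝ) := by exact_mod_cast hd.1
          have hd0 : (0:ℝ) < (d:ℝ) := by linarith
          set q : ℕ := N / d with hq
          have hql : (q:ℝ) ≤ (N:ℝ)/(d:ℝ) := by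
            rw [le_div_iff₀ hd0]
            exact_mod_cast Nat.div_mul_le_self N d
          have hqu : (N:ℝ)/(d:ℝ) < (q:ℝ) + 1 := by
            rw [div_lt_iff₀ hd0]
            exact_mod_cast (Nat.div_lt_iff_lt_mul (by omega : 0 < d)).mp (Nat.lt_succ_self q)
          rw [abs_mul]
          have h1 : |((q:ℝ))^2 - (N:ℝ)^2/(d:ℝ)^2| ≤ 2*((N:ℝ)/(d:ℝ)) := by
            have hr2 : (N:ℝ)^2/(d:ℝ)^2 = ((N:ℝ)/(d:ℝ))^2 := by ring
            have hq2 : (q:ℝ)^2 ≤ ((N:ℝ)/(d:ℝ))^2 :=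
              pow_le_pow_left₀ (Nat.cast_nonneg q) hql 2
            rw [hr2, abs_sub_comm, abs_of_nonneg (by linarith)]
            nlinarith [Nat.cast_nonneg (α := ℝ) q]
          calc |(μ d : ℝ)| * |((q:ℝ))^2 - (N:ℝ)^2/(d:ℝ)^2|
              ≤ 1 * (2*((N:ℝ)/(d:ℝ))) := by
                exact mul_le_mul (abs_mu_real_le_one d) h1 (abs_nonneg _) zero_le_one
            _ = 2*(N:ℝ)*((d:ℝ))⁻¹ := by rw [one_mul, div_eq_mul_inv]; ring
      _ = 2*(N:ℝ) * ∑ d ∈ Finset.Icc 1 N, ((d:ℝ))⁻¹ := by rw [Finset.mul_sum]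
      _ ≤ 2*(N:ℝ)*(1+Real.log N) := by
          have := harmonic_sum_le N
          nlinarith [(by exact_mod_cast hN : (1:ℝ) ≤ (N:ℝ))]
  have hRabs : |R| ≤ (N:ℝ)⁻¹ := by
    rw [hR]
    calc |∑' i : ℕ, (μ (i + (N+1)) : ℝ) / ((i + (N+1) : ℕ):ℝ)^2|
        ≤ ∑' i : ℕ, |(μ (i + (N+1)) : ℝ) / ((i + (N+1) : ℕ):ℝ)^2| := by
          have hs : Summable (fun i : ℕ => |(μ (i + (N+1)) : ℝ) / ((i + (N+1) : ℕ):ℝ)^2|) := by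
            apply Summable.abs
            have := (summable_nat_add_iff (f := fun d : ℕ => (μ d : ℝ)/(d:ℝ)^2) (N+1)).mpr
              summable_mu_div_sq
            simpa using this
          have hs' : Summable (fun i : ℕ => ‖(μ (i + (N+1)) : ℝ) / ((i + (N+1) : ℕ):ℝ)^2‖) := by
            simp only [Real.norm_eq_abs]; exact hs
          have h := norm_tsum_le_tsum_norm hs'
          simp only [Real.norm_eq_abs] at h
          exact h
      _ ≤ ∑' i : ℕ, (((i + (N+1) : ℕ):ℝ)^2)⁻¹ := by
          apply Summable.tsum_le_tsum
          · intro i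
            rw [abs_div, abs_of_nonneg (by positivity : (0:ℝ) ≤ ((i + (N+1):ℕ):ℝ)^2),
              div_eq_mul_inv]
            have h0 : (0:ℝ) ≤ (((i + (N+1):ℕ):ℝ)^2)⁻¹ := by positivity
            nlinarith [abs_mu_real_le_one (i + (N+1)), abs_nonneg ((μ (i+(N+1)) : ℝ))]
          · apply Summable.abs
            have := (summable_nat_add_iff (f := fun d : ℕ => (μ d : ℝ)/(d:ℝ)^2) (N+1)).mpr
              summable_mu_div_sq
            simpa using this
          · have := (summable_nat_add_iff (f := fun n : ℕ => ((n:ℝ)^2)⁻¹) (N+1)).mpr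
              (Real.summable_nat_pow_inv.mpr one_lt_two)
            simpa using this
      _ ≤ (N:ℝ)⁻¹ := tail_inv_sq_le N hN
  have hN0 : (0:ℝ) < (N:ℝ) := by exact_mod_cast hN
  calc |_ - R * (N:ℝ)^2| ≤ |∑ d ∈ Finset.Icc 1 N, (μ d : ℝ) * (((N / d : ℕ) : ℝ)^2 - (N:ℝ)^2/(d:ℝ)^2)| + |R * (N:ℝ)^2| := abs_sub _ _
    _ ≤ 2*N*(1+Real.log N) + (N:ℝ)⁻¹ * (N:ℝ)^2 := by
        rw [abs_mul, abs_of_nonneg (by positivity : (0:ℝ) ≤ (N:ℝ)^2)]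
        have : |R| * (N:ℝ)^2 ≤ (N:ℝ)⁻¹ * (N:ℝ)^2 := by nlinarith
        linarith [habs]
    _ = 2*N*(1+Real.log N) + N := by field_simp

lemma pow_le_floor_iff (k : ℕ) (hk : 1 ≤ k) (H : ℝ) (hH : 1 ≤ H) (a : ℕ) :
    a ^ k ≤ ⌊H⌋₊ ↔ a ≤ ⌊H ^ (1/(k:ℝ))⌋₊ := by
  have hH0 : (0:ℝ) ≤ H := by linarith
  have hk0 : (0:ℝ) < (k:ℝ) := by exact_mod_cast hk
  rw [Nat.le_floor_iff hH0, Nat.le_floor_iff (Real.rpow_nonneg hH0 _)]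
  push_cast
  rw [one_div, Real.le_rpow_inv_iff_of_pos (Nat.cast_nonneg a) hH0 hk0,
    Real.rpow_natCast]

lemma card_eq_card (k : ℕ) (hk : 2 ≤ k) (H : ℝ) (hH : 1 ≤ H) :
    ((Finset.Icc 1 ⌊H⌋₊ ×ˢ Finset.Icc 1 ⌊H⌋₊).filter
        (fun p : ℕ × ℕ => Nat.Coprime p.1 p.2 ∧
          ∃ m : ℕ, 0 < m ∧ p.1 * p.2 = m ^ k)).card
    = ((Finset.Icc 1 ⌊H ^ (1/(k:ℝ))⌋₊ ×ˢ Finset.Icc 1 ⌊H ^ (1/(k:ℝ))⌋₊).filter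
        (fun p : ℕ × ℕ => Nat.Coprime p.1 p.2)).card := by
  classical
  have hk1 : 1 ≤ k := by omega
  symm
  refine Finset.card_bij (fun (p : ℕ × ℕ) _ => (p.1 ^ k, p.2 ^ k)) ?_ ?_ ?_
  · rintro ⟨a, b⟩ hp
    simp only [Finset.mem_filter, Finset.mem_product, Finset.mem_Icc] at hp ⊢
    obtain ⟨⟨⟨ha1, haN⟩, ⟨hb1, hbN⟩⟩, hcop⟩ := hp
    refine ⟨⟨⟨Nat.one_le_iff_ne_zero.mpr (pow_ne_zero k (by omega)),
      (pow_le_floor_iff k hk1 H hH a).mpr haN⟩,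
      ⟨Nat.one_le_iff_ne_zero.mpr (pow_ne_zero k (by omega)),
      (pow_le_floor_iff k hk1 H hH b).mpr hbN⟩⟩,
      hcop.pow k k, a * b, by positivity, by rw [mul_pow]⟩
  · rintro ⟨a, b⟩ hp ⟨a', b'⟩ hp' h
    simp only [Prod.mk.injEq] at h
    have h1 := Nat.pow_left_injective (by omega) h.1
    have h2 := Nat.pow_left_injective (by omega) h.2
    simp [h1, h2]
  · rintro ⟨x₁, x₂⟩ hp
    simp only [Finset.mem_filter, Finset.mem_product, Finset.mem_Icc] at hp
    obtain ⟨⟨⟨hx1, hx1N⟩, ⟨hx2, hx2N⟩⟩, hcop, m, hm, hprod⟩ := hp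
    have hunit : IsUnit (gcd x₁ x₂) := by
      rw [Nat.isUnit_iff]
      exact hcop
    obtain ⟨a, ha⟩ := exists_eq_pow_of_mul_eq_pow hunit hprod
    have hunit' : IsUnit (gcd x₂ x₁) := by
      rw [Nat.isUnit_iff]
      exact hcop.symm
    obtain ⟨b, hb⟩ := exists_eq_pow_of_mul_eq_pow hunit' (by rwa [mul_comm] at hprod)
    have ha0 : 1 ≤ a := by
      rcases Nat.eq_zero_or_pos a with rfl | h
      · simp [zero_pow (by omega : k ≠ 0)] at ha; omega
      · exact h
    have hb0 : 1 ≤ b := by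
      rcases Nat.eq_zero_or_pos b with rfl | h
      · simp [zero_pow (by omega : k ≠ 0)] at hb; omega
      · exact h
    refine ⟨(a, b), ?_, ?_⟩
    · simp only [Finset.mem_filter, Finset.mem_product, Finset.mem_Icc]
      refine ⟨⟨⟨ha0, (pow_le_floor_iff k hk1 H hH a).mp (ha ▸ hx1N)⟩,
        ⟨hb0, (pow_le_floor_iff k hk1 H hH b).mp (hb ▸ hx2N)⟩⟩, ?_⟩
      have hco : Nat.Coprime (a ^ k) (b ^ k) := by rw [← ha, ← hb]; exact hcop
      rw [Nat.coprime_pow_left_iff (by omega : 0 < k),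
        Nat.coprime_pow_right_iff (by omega : 0 < k)] at hco
      exact hco
    · simp [← ha, ← hb]

theorem coprime_pairs_kth_power_asymptotic (k : ℕ) (hk : 2 ≤ k) :
    (fun H : ℝ =>
        (((Finset.Icc 1 ⌊H⌋₊ ×ˢ Finset.Icc 1 ⌊H⌋₊).filter
            (fun p : ℕ × ℕ => Nat.Coprime p.1 p.2 ∧
              ∃ m : ℕ, 0 < m ∧ p.1 * p.2 = m ^ k)).card : ℝ)
          - (6 / Real.pi ^ 2) * H ^ (2 / (k : ℝ)))
      =O[atTop] fun H : ℝ => H ^ (1 / (k : ℝ)) * Real.log H := by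
  rw [Asymptotics.isBigO_iff]
  refine ⟨10, ?_⟩
  filter_upwards [eventually_ge_atTop (3:ℝ)] with H hH3
  have hH1 : (1:ℝ) ≤ H := by linarith
  have hH0 : (0:ℝ) ≤ H := by linarith
  have hk0 : (0:ℝ) < (k:ℝ) := by exact_mod_cast (by omega : 0 < k)
  set x : ℝ := H ^ (1/(k:ℝ)) with hxdef
  have hx1 : (1:ℝ) ≤ x := by
    rw [hxdef, one_div]
    have := Real.rpow_le_rpow_of_exponent_le hH1 (by positivity : (0:ℝ) ≤ ((k:ℝ))⁻¹)
    simpa [Real.rpow_zero] using this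
  have hx0 : (0:ℝ) < x := by linarith
  set N : ℕ := ⌊x⌋₊ with hNdef
  have hN1 : 1 ≤ N := Nat.le_floor (by exact_mod_cast hx1)
  have hN1R : (1:ℝ) ≤ (N:ℝ) := by exact_mod_cast hN1
  have hNx : (N:ℝ) ≤ x := Nat.floor_le (by linarith)
  have hxN : x ≤ (N:ℝ) + 1 := (Nat.lt_floor_add_one x).le
  have hxsq : H ^ ((2:ℝ)/(k:ℝ)) = x^2 := by
    rw [show (2:ℝ)/(k:ℝ) = (1/(k:ℝ))*((2:ℕ):ℝ) by push_cast; ring,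
      Real.rpow_mul hH0, Real.rpow_natCast]
  have hcard := card_eq_card k hk H hH1
  rw [hcard, hxsq]
  -- T = 6/π² ≤ 1
  have hpi : (3:ℝ) < Real.pi := Real.pi_gt_three
  have hT0 : (0:ℝ) ≤ 6 / Real.pi ^ 2 := by positivity
  have hT1 : 6 / Real.pi ^ 2 ≤ 1 := by
    rw [div_le_one (by positivity)]
    nlinarith
  have hest := count_est N hN1
  have htri : |(((Finset.Icc 1 N ×ˢ Finset.Icc 1 N).filter
        (fun p : ℕ × ℕ => Nat.Coprime p.1 p.2)).card : ℝ) - 6 / Real.pi ^ 2 * x^2|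
      ≤ (2*N*(1+Real.log N) + N) + 2*x := by
    have h2 : |6 / Real.pi ^ 2 * (N:ℝ)^2 - 6 / Real.pi ^ 2 * x^2| ≤ 2*x := by
      rw [← mul_sub, abs_mul, abs_of_nonneg hT0, abs_sub_comm,
        abs_of_nonneg (by nlinarith : (0:ℝ) ≤ x^2 - (N:ℝ)^2)]
      have : x^2 - (N:ℝ)^2 ≤ 2*x := by nlinarith
      nlinarith
    calc |(((Finset.Icc 1 N ×ˢ Finset.Icc 1 N).filter
          (fun p : ℕ × ℕ => Nat.Coprime p.1 p.2)).card : ℝ) - 6 / Real.pi ^ 2 * x^2|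
        ≤ |(((Finset.Icc 1 N ×ˢ Finset.Icc 1 N).filter
          (fun p : ℕ × ℕ => Nat.Coprime p.1 p.2)).card : ℝ) - 6 / Real.pi ^ 2 * (N:ℝ)^2|
          + |6 / Real.pi ^ 2 * (N:ℝ)^2 - 6 / Real.pi ^ 2 * x^2| := abs_sub_le _ _ _
      _ ≤ (2*N*(1+Real.log N) + N) + 2*x := add_le_add hest h2
  -- log bounds
  have hlog1 : (1:ℝ) ≤ Real.log H := by
    rw [show (1:ℝ) = Real.log (Real.exp 1) by rw [Real.log_exp]]
    apply Real.log_le_log (Real.exp_pos 1)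
    have := Real.exp_one_lt_d9
    linarith
  have hlogN : Real.log N ≤ Real.log H := by
    apply Real.log_le_log (by linarith)
    have hxH : x ≤ H := by
      rw [hxdef, one_div]
      have := Real.rpow_le_rpow_of_exponent_le hH1
        (by rw [inv_le_one_iff₀]; right; exact_mod_cast (by omega : (1:ℕ) ≤ k) : ((k:ℝ))⁻¹ ≤ 1)
      simpa [Real.rpow_one] using this
    linarith
  have hlogN0 : 0 ≤ Real.log N := Real.log_nonneg hN1R
  rw [Real.norm_eq_abs, Real.norm_eq_abs]
  have hrhs : |x * Real.log H| = x * Real.log H := abs_of_nonneg (by nlinarith)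
  rw [hrhs]
  refine htri.trans ?_
  nlinarith [mul_le_mul hNx (add_le_add hlog1 hlogN) (by linarith) (by linarith : (0:ℝ) ≤ x),
    mul_le_mul hNx hlog1 zero_le_one (by linarith : (0:ℝ) ≤ x)]
end

section
/- For k ≥ 3 and H ≥ 2, the sum Σ u₁^{k-2} u₂^{k-3} ⋯ u_{k-2} over (k−2)-tuples of positive integers with u₁^{k-1} u₂^{k-2} ⋯ u_{k-2}² < 2H is O(H (log H)^{k-3}). -/
open Filter Finset

private lemma sum_piFinset_snoc {β : Type*} [AddCommMonoid β] (n : ℕ) (I : Finset ℕ)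
    (g : (Fin (n + 1) → ℕ) → β) :
    ∑ u ∈ Fintype.piFinset (fun _ : Fin (n + 1) => I), g u
      = ∑ v ∈ Fintype.piFinset (fun _ : Fin n => I), ∑ m ∈ I, g (Fin.snoc v m) := by
  rw [← Finset.sum_product']
  refine Finset.sum_nbij' (fun u => (Fin.init u, u (Fin.last n)))
    (fun p => Fin.snoc p.1 p.2) ?_ ?_ ?_ ?_ ?_
  · intro u hu
    simp only [Fintype.mem_piFinset] at hu
    exact Finset.mem_product.2 ⟨Fintype.mem_piFinset.2 fun i => hu _, hu _⟩
  · intro p hp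
    obtain ⟨h1, h2⟩ := Finset.mem_product.1 hp
    simp only [Fintype.mem_piFinset] at h1 ⊢
    intro i
    refine Fin.lastCases ?_ ?_ i
    · simpa using h2
    · intro j; simpa using h1 j
  · intro u _; exact Fin.snoc_init_self u
  · intro p _; simp
  · intro u _; rw [Fin.snoc_init_self]

private lemma aux_sum_le (n : ℕ) (H : ℝ) (hH : 2 ≤ H) :
    ∑ u ∈ (Fintype.piFinset fun _ : Fin (n + 1) => Finset.Icc 1 ⌊2 * H⌋₊).filter
        (fun u : Fin (n + 1) → ℕ =>
          ∏ j : Fin (n + 1), ((u j : ℝ)) ^ (n + 2 - j.val) < 2 * H),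
      ∏ j : Fin (n + 1), ((u j : ℝ)) ^ (n + 1 - j.val)
    ≤ 2 * H * (1 + Real.log (2 * H)) ^ n := by
  have hH0 : (0:ℝ) < 2 * H := by linarith
  set M := ⌊2 * H⌋₊ with hM
  rw [Finset.sum_filter, sum_piFinset_snoc]
  refine le_trans (Finset.sum_le_sum
    (g := fun v : Fin n → ℕ => 2 * H * ∏ i : Fin n, ((v i : ℝ))⁻¹) fun v hv => ?_) ?_
  · simp only [Fin.prod_univ_castSucc, Fin.snoc_castSucc, Fin.snoc_last, Fin.coe_castSucc,
      Fin.val_last, Nat.add_sub_cancel_left, pow_one]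
    have hv1 : ∀ i, (1:ℝ) ≤ (v i : ℝ) := fun i => by
      exact_mod_cast (Finset.mem_Icc.1 (Fintype.mem_piFinset.1 hv i)).1
    set P : ℝ := ∏ i : Fin n, ((v i : ℝ)) ^ (n + 2 - i.val) with hPdef
    set Q : ℝ := ∏ i : Fin n, ((v i : ℝ)) ^ (n + 1 - i.val) with hQdef
    have hP1 : (1:ℝ) ≤ P := by
      rw [hPdef]
      calc (1:ℝ) = ∏ _i : Fin n, (1:ℝ) := by simp
        _ ≤ ∏ i : Fin n, ((v i : ℝ)) ^ (n + 2 - i.val) :=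
            Finset.prod_le_prod (fun i _ => by norm_num) (fun i _ => one_le_pow₀ (hv1 i))
    have hP0 : (0:ℝ) < P := lt_of_lt_of_le one_pos hP1
    have hQ0 : (0:ℝ) ≤ Q :=
      Finset.prod_nonneg fun i _ => pow_nonneg (by linarith [hv1 i]) _
    have hQP : Q = P * ∏ i : Fin n, ((v i : ℝ))⁻¹ := by
      rw [hPdef, hQdef, ← Finset.prod_mul_distrib]
      refine Finset.prod_congr rfl fun i _ => ?_
      have hne : (v i : ℝ) ≠ 0 := by have := hv1 i; intro h; rw [h] at this; linarith
      have h1 : n + 2 - i.val = (n + 1 - i.val) + 1 := by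
        have := i.isLt; omega
      rw [h1, pow_succ, mul_assoc, mul_inv_cancel₀ hne, mul_one]
    set N := ⌊Real.sqrt (2 * H / P)⌋₊ with hN
    have hdiv0 : (0:ℝ) ≤ 2 * H / P := by positivity
    calc ∑ x ∈ Finset.Icc 1 M, (if P * (x:ℝ) ^ 2 < 2 * H then Q * (x:ℝ) else 0)
        = ∑ x ∈ (Finset.Icc 1 M).filter (fun x : ℕ => P * (x:ℝ) ^ 2 < 2 * H), Q * (x:ℝ) := by
          rw [Finset.sum_filter]
      _ ≤ ∑ x ∈ Finset.Icc 1 N, Q * (x:ℝ) := by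
          refine Finset.sum_le_sum_of_subset_of_nonneg ?_ fun x _ _ => by positivity
          intro x hx
          obtain ⟨hx1, hx2⟩ := Finset.mem_filter.1 hx
          refine Finset.mem_Icc.2 ⟨(Finset.mem_Icc.1 hx1).1, Nat.le_floor ?_⟩
          rw [Real.le_sqrt (by positivity)]
          · rw [le_div_iff₀ hP0]
            nlinarith
          · exact hdiv0
      _ ≤ Q * ((N:ℝ) * (N:ℝ)) := by
          rw [← Finset.mul_sum]
          refine mul_le_mul_of_nonneg_left ?_ hQ0
          calc ∑ x ∈ Finset.Icc 1 N, (x:ℝ) ≤ ∑ _x ∈ Finset.Icc 1 N, (N:ℝ) := by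
                refine Finset.sum_le_sum fun x hx => ?_
                exact_mod_cast (Finset.mem_Icc.1 hx).2
            _ = (N:ℝ) * (N:ℝ) := by
                rw [Finset.sum_const, Nat.card_Icc, nsmul_eq_mul]
                push_cast; ring
      _ ≤ Q * (2 * H / P) := by
          refine mul_le_mul_of_nonneg_left ?_ hQ0
          have h1 : (N:ℝ) ≤ Real.sqrt (2 * H / P) := Nat.floor_le (Real.sqrt_nonneg _)
          nlinarith [Real.sq_sqrt hdiv0, Real.sqrt_nonneg (2 * H / P)]
      _ = 2 * H * ∏ i : Fin n, ((v i : ℝ))⁻¹ := by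
          rw [hQP]; field_simp
  · rw [← Finset.mul_sum,
      Finset.sum_prod_piFinset (Finset.Icc 1 M) (fun (_ : Fin n) (m : ℕ) => ((m:ℝ))⁻¹)]
    refine mul_le_mul_of_nonneg_left ?_ (by linarith)
    rw [Finset.prod_const, Finset.card_univ, Fintype.card_fin]
    have hM1 : 1 ≤ M := Nat.le_floor (by push_cast; linarith)
    have hsum : ∑ m ∈ Finset.Icc 1 M, ((m:ℝ))⁻¹ = ((harmonic M : ℚ) : ℝ) := by
      rw [harmonic_eq_sum_Icc]; push_cast; rfl
    have hle : ∑ m ∈ Finset.Icc 1 M, ((m:ℝ))⁻¹ ≤ 1 + Real.log (2 * H) := by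
      rw [hsum]
      refine (harmonic_le_one_add_log M).trans ?_
      have h1 : (M:ℝ) ≤ 2 * H := Nat.floor_le (by linarith)
      have h2 : (0:ℝ) < M := by exact_mod_cast hM1
      linarith [Real.log_le_log h2 h1]
    have h0 : (0:ℝ) ≤ ∑ m ∈ Finset.Icc 1 M, ((m:ℝ))⁻¹ := by positivity
    exact pow_le_pow_left₀ h0 hle n

theorem sum_tuples_bigO (k : ℕ) (hk : 3 ≤ k) :
    (fun H : ℝ =>
        ∑ u ∈ (Fintype.piFinset fun _ : Fin (k - 2) => Finset.Icc 1 ⌊2 * H⌋₊).filter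
            (fun u : Fin (k - 2) → ℕ =>
              ∏ j : Fin (k - 2), ((u j : ℝ)) ^ (k - 1 - j.val) < 2 * H),
          ∏ j : Fin (k - 2), ((u j : ℝ)) ^ (k - 2 - j.val))
      =O[atTop] fun H : ℝ => H * (Real.log H) ^ (k - 3) := by
  obtain ⟨n, rfl⟩ : ∃ n, k = n + 3 := ⟨k - 3, by omega⟩
  show (fun H : ℝ =>
        ∑ u ∈ (Fintype.piFinset fun _ : Fin (n + 1) => Finset.Icc 1 ⌊2 * H⌋₊).filter
            (fun u : Fin (n + 1) → ℕ =>
              ∏ j : Fin (n + 1), ((u j : ℝ)) ^ (n + 2 - j.val) < 2 * H),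
          ∏ j : Fin (n + 1), ((u j : ℝ)) ^ (n + 1 - j.val))
      =O[atTop] fun H : ℝ => H * (Real.log H) ^ n
  rw [Asymptotics.isBigO_iff]
  refine ⟨2 * 2 ^ n, ?_⟩
  filter_upwards [eventually_ge_atTop (8:ℝ)] with H hH
  have hH0 : (0:ℝ) < H := by linarith
  have hlog : (1:ℝ) + Real.log (2 * H) ≤ 2 * Real.log H := by
    rw [Real.log_mul two_ne_zero hH0.ne']
    have h8 : Real.log 8 ≤ Real.log H := Real.log_le_log (by norm_num) hH
    have h8e : Real.log 8 = 3 * Real.log 2 := by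
      rw [show (8:ℝ) = 2 ^ 3 by norm_num, Real.log_pow]; push_cast; ring
    have := Real.log_two_gt_d9
    nlinarith
  have hlogH0 : 0 ≤ Real.log H := Real.log_nonneg (by linarith)
  have hS0 : 0 ≤ ∑ u ∈ (Fintype.piFinset fun _ : Fin (n + 1) => Finset.Icc 1 ⌊2 * H⌋₊).filter
      (fun u : Fin (n + 1) → ℕ =>
        ∏ j : Fin (n + 1), ((u j : ℝ)) ^ (n + 2 - j.val) < 2 * H),
      ∏ j : Fin (n + 1), ((u j : ℝ)) ^ (n + 1 - j.val) :=
    Finset.sum_nonneg fun u _ => Finset.prod_nonneg fun j _ => by positivity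
  rw [Real.norm_eq_abs, Real.norm_eq_abs, abs_of_nonneg hS0,
    abs_of_nonneg (by positivity : (0:ℝ) ≤ H * Real.log H ^ n)]
  calc _ ≤ 2 * H * (1 + Real.log (2 * H)) ^ n := aux_sum_le n H (by linarith)
    _ ≤ 2 * H * (2 * Real.log H) ^ n := by
        refine mul_le_mul_of_nonneg_left (pow_le_pow_left₀ ?_ hlog n) (by linarith)
        have := Real.log_nonneg (by linarith : (1:ℝ) ≤ 2 * H)
        linarith
    _ = 2 * 2 ^ n * (H * Real.log H ^ n) := by rw [mul_pow]; ring
end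

section
/- For k ≥ 2 and H ≥ 2, the sum W_k(H) = Σ y^{1/k}/η(y), over k-free positive integers y ≤ H satisfying η(y)^k ≤ H·y, is O(H^{1/k} (log H)^{k-2}). -/
open Filter
open scoped Classical

lemma radical_pos (n : ℕ) : 0 < radical n :=
  Finset.prod_pos fun _ hp => (Nat.prime_of_mem_primeFactors hp).pos

noncomputable def mT (j y : ℕ) : ℕ :=
  ∏ p ∈ y.primeFactors.filter (fun p => y.factorization p = j), p

noncomputable def zT (j y : ℕ) : ℕ := y / (mT j y) ^ j

lemma mT_pos (j y : ℕ) : 0 < mT j y :=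
  Finset.prod_pos fun _ hp =>
    (Nat.prime_of_mem_primeFactors (Finset.mem_filter.1 hp).1).pos

lemma fact_mT (j y : ℕ) (q : ℕ) :
    (mT j y).factorization q =
      if q ∈ y.primeFactors.filter (fun p => y.factorization p = j) then 1 else 0 := by
  rw [mT, Nat.factorization_prod (fun p hp =>
    (Nat.prime_of_mem_primeFactors (Finset.mem_filter.1 hp).1).ne_zero)]
  rw [Finset.sum_apply']
  rw [Finset.sum_congr rfl (fun p hp => by
    rw [Nat.Prime.factorization (Nat.prime_of_mem_primeFactors (Finset.mem_filter.1 hp).1),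
      Finsupp.single_apply])]
  simp [Finset.sum_ite_eq]

lemma mT_pow_dvd (j y : ℕ) (hy : y ≠ 0) : (mT j y) ^ j ∣ y := by
  rw [← Nat.factorization_le_iff_dvd (pow_ne_zero _ (mT_pos j y).ne') hy]
  intro q
  rw [Nat.factorization_pow, Finsupp.smul_apply, fact_mT, smul_eq_mul]
  split_ifs with h
  · rw [mul_one]
    exact le_of_eq (Finset.mem_filter.1 h).2.symm
  · simp

lemma zT_mul (j y : ℕ) (hy : y ≠ 0) : (mT j y) ^ j * zT j y = y :=
  Nat.mul_div_cancel' (mT_pow_dvd j y hy) 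

lemma zT_pos (j y : ℕ) (hy : y ≠ 0) : 0 < zT j y := by
  rcases Nat.eq_zero_or_pos (zT j y) with h | h
  · exfalso; apply hy; rw [← zT_mul j y hy, h, mul_zero]
  · exact h

lemma fact_zT (j y : ℕ) (hy : y ≠ 0) (q : ℕ) :
    (zT j y).factorization q = y.factorization q -
      (if q ∈ y.primeFactors.filter (fun p => y.factorization p = j) then j else 0) := by
  rw [zT, Nat.factorization_div (mT_pow_dvd j y hy)]
  rw [Finsupp.tsub_apply, Nat.factorization_pow, Finsupp.smul_apply, fact_mT, smul_eq_mul]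
  split_ifs <;> simp

lemma mem_primeFactors_iff_fact (y q : ℕ) : q ∈ y.primeFactors ↔ y.factorization q ≠ 0 := by
  rw [← Nat.support_factorization, Finsupp.mem_support_iff]

lemma zT_free (j y : ℕ) (hj : 1 ≤ j) (hy : y ≠ 0)
    (hfree : ∀ p : ℕ, p.Prime → ¬ p ^ (j + 1) ∣ y) :
    ∀ p : ℕ, p.Prime → ¬ p ^ j ∣ zT j y := by
  intro p hp hdvd
  rw [Nat.Prime.pow_dvd_iff_le_factorization hp (zT_pos j y hy).ne'] at hdvd
  rw [fact_zT j y hy] at hdvd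
  have hle : y.factorization p ≤ j := by
    by_contra h
    exact hfree p hp ((Nat.Prime.pow_dvd_iff_le_factorization hp hy).2 (by omega))
  split_ifs at hdvd with h
  · have := (Finset.mem_filter.1 h).2
    omega
  · have : y.factorization p ≠ j ∨ y.factorization p = 0 := by
      by_cases hmem : p ∈ y.primeFactors
      · exact Or.inl fun hEq => h (Finset.mem_filter.2 ⟨hmem, hEq⟩)
      · exact Or.inr (by rwa [mem_primeFactors_iff_fact, not_not] at hmem)
    omega

lemma primeFactors_zT (j y : ℕ) (hy : y ≠ 0) :
    (zT j y).primeFactors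
      = y.primeFactors.filter (fun p => ¬ y.factorization p = j) := by
  ext q
  rw [mem_primeFactors_iff_fact, fact_zT j y hy]
  simp only [Finset.mem_filter]
  have hf := mem_primeFactors_iff_fact y q
  by_cases hq : q ∈ y.primeFactors
  · by_cases hj' : y.factorization q = j
    · rw [if_pos ⟨hq, hj'⟩, hj']
      simp [hj', hq]
    · rw [if_neg (by tauto), Nat.sub_zero]
      rw [hf] at hq
      tauto
  · rw [if_neg (by tauto), Nat.sub_zero]
    constructor
    · intro hne; exact absurd (hf.2 hne) hq
    · rintro ⟨h1, _⟩; exact absurd h1 hq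

lemma radical_split (j y : ℕ) (hy : y ≠ 0) :
    radical y = mT j y * radical (zT j y) := by
  rw [radical, radical, primeFactors_zT j y hy, mT,
    ← Finset.prod_filter_mul_prod_filter_not y.primeFactors (fun p => y.factorization p = j)]

lemma sum_inv_le (n : ℕ) :
    ∑ m ∈ Finset.Icc 1 n, (1 : ℝ) / m ≤ 1 + Real.log n := by
  have h := harmonic_le_one_add_log n
  rw [harmonic_eq_sum_Icc] at h
  push_cast at h
  simpa [one_div] using h

lemma bern (t a : ℝ) (ht0 : 0 ≤ t) (ht1 : t ≤ 1) (ha0 : 1/2 ≤ a) (ha1 : a ≤ 1) :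
    t ^ a ≤ a + (1 - a) * t := by
  have h1 : t ^ a * 1 ^ (1 - a) ≤ a * t + (1 - a) * 1 :=
    Real.geom_mean_le_arith_mean2_weighted (by linarith) (by linarith) ht0 (by norm_num)
      (by ring)
  rw [Real.one_rpow, mul_one, mul_one] at h1
  nlinarith

lemma sum_rpow_le' (a K : ℝ) (ha0 : 1/2 ≤ a) (ha1 : a < 1) (hK : K * (1 - a) = 1) (n : ℕ) :
    ∑ m ∈ Finset.Icc 1 n, (m : ℝ) ^ (a - 1) ≤ K * (n : ℝ) ^ a := by
  have hK0 : 0 ≤ K := by nlinarith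
  induction n with
  | zero =>
      rw [Finset.Icc_eq_empty (by norm_num), Finset.sum_empty, Nat.cast_zero,
        Real.zero_rpow (by linarith : a ≠ 0), mul_zero]
  | succ n ih =>
      rw [Finset.sum_Icc_succ_top (by omega : 1 ≤ n + 1)]
      have hx : (0:ℝ) < (n:ℝ) + 1 := by positivity
      set X : ℝ := ((n:ℝ) + 1) ^ a with hX
      have hX0 : 0 ≤ X := Real.rpow_nonneg (by positivity) a
      set c : ℝ := 1 / ((n:ℝ) + 1) with hc
      have hc0 : 0 ≤ c := by positivity
      have hc1 : ((n:ℝ) * c) + c = 1 := by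
        rw [hc]; field_simp
      have ht : (n:ℝ) * c ≤ 1 := by nlinarith
      have key : (n : ℝ) ^ a ≤ X * (a + (1 - a) * ((n:ℝ) * c)) := by
        calc (n : ℝ) ^ a = (((n:ℝ)+1) * ((n:ℝ) * c)) ^ a := by
              rw [hc]; rw [show ((n:ℝ)+1) * ((n:ℝ) * (1/((n:ℝ)+1))) = (n:ℝ) by field_simp]
          _ = X * ((n:ℝ) * c) ^ a := by
              rw [hX, Real.mul_rpow (by positivity) (by positivity)]
          _ ≤ X * (a + (1 - a) * ((n:ℝ) * c)) :=
              mul_le_mul_of_nonneg_left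
                (bern _ a (by positivity) ht ha0 ha1.le) hX0
      have hterm : (((n:ℕ):ℝ) + 1) ^ (a - 1) = X * c := by
        push_cast
        rw [hX, hc, show a - 1 = a + (-1) by ring, Real.rpow_add hx, Real.rpow_neg_one]
        ring
      have h2 : K * (n:ℝ) ^ a ≤ K * X * a + X * ((n:ℝ) * c) := by
        calc K * (n:ℝ) ^ a ≤ K * (X * (a + (1 - a) * ((n:ℝ) * c))) :=
              mul_le_mul_of_nonneg_left key hK0
          _ = K * X * a + (K * (1 - a)) * (X * ((n:ℝ) * c)) := by ring
          _ = K * X * a + X * ((n:ℝ) * c) := by rw [hK, one_mul]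
      have h3 : X * ((n:ℝ) * c) + X * c = X := by
        calc X * ((n:ℝ) * c) + X * c = X * (((n:ℝ) * c) + c) := by ring
          _ = X := by rw [hc1, mul_one]
      have h4 : K * X * a + X = K * X := by
        calc K * X * a + X = K * X * a + (K * (1-a)) * X := by rw [hK, one_mul]
          _ = K * X := by ring
      push_cast
      push_cast at hterm ih
      rw [hterm]
      linarith

noncomputable def Zset (j N : ℕ) : Finset ℕ :=
  (Finset.Icc 1 N).filter (fun z => ∀ p : ℕ, p.Prime → ¬ p ^ j ∣ z)

noncomputable def G (j N : ℕ) : ℝ := ∑ z ∈ Zset j N, (1 : ℝ) / radical z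

lemma G_nonneg (j N : ℕ) : 0 ≤ G j N :=
  Finset.sum_nonneg fun z _ => by positivity

lemma G_one (N : ℕ) : G 1 N ≤ 1 := by
  have hsub : Zset 1 N ⊆ {1} := by
    intro z hz
    rw [Zset, Finset.mem_filter, Finset.mem_Icc] at hz
    rw [Finset.mem_singleton]
    by_contra hne
    obtain ⟨p, hp, hpd⟩ := Nat.exists_prime_and_dvd hne
    exact hz.2 p hp (by simpa using hpd)
  calc G 1 N ≤ ∑ z ∈ {1}, (1:ℝ)/radical z :=
        Finset.sum_le_sum_of_subset_of_nonneg hsub (fun z _ _ => by positivity)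
    _ = 1 / radical 1 := Finset.sum_singleton _ _
    _ ≤ 1 := by norm_num [radical]

lemma G_step (j N : ℕ) (hj : 1 ≤ j) (hN : 1 ≤ N) :
    G (j + 1) N ≤ (1 + Real.log N) * G j N := by
  classical
  have key : G (j+1) N ≤ ∑ p ∈ (Finset.Icc 1 N) ×ˢ Zset j N,
      (1:ℝ)/(p.1) * (1/radical p.2) := by
    rw [G]
    have hterm : ∀ z ∈ Zset (j+1) N, (1:ℝ)/(radical z : ℝ)
        = (fun p : ℕ × ℕ => (1:ℝ)/(p.1 : ℝ) * (1/(radical p.2 : ℝ))) (mT j z, zT j z) := by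
      intro z hz
      have hz0 : z ≠ 0 := by
        have := (Finset.mem_Icc.1 (Finset.mem_filter.1 hz).1).1; omega
      simp only
      rw [div_mul_div_comm, one_mul, radical_split j z hz0]
      push_cast
      ring_nf
    rw [Finset.sum_congr rfl hterm]
    have hinj : Set.InjOn (fun z => ((mT j z, zT j z) : ℕ × ℕ)) (Zset (j+1) N) := by
      intro z hz z' hz' hEq
      have h1 : z ≠ 0 := by
        have := (Finset.mem_Icc.1 (Finset.mem_filter.1 hz).1).1; omega
      have h1' : z' ≠ 0 := by
        have := (Finset.mem_Icc.1 (Finset.mem_filter.1 hz').1).1; omega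
      have e1 : mT j z = mT j z' := congrArg Prod.fst hEq
      have e2 : zT j z = zT j z' := congrArg Prod.snd hEq
      rw [← zT_mul j z h1, ← zT_mul j z' h1', e1, e2]
    have himg := Finset.sum_image (s := Zset (j+1) N)
      (f := fun p : ℕ × ℕ => (1:ℝ)/(p.1 : ℝ) * (1/(radical p.2 : ℝ)))
      (g := fun z => (mT j z, zT j z)) (fun z hz z' hz' h => hinj hz hz' h)
    refine le_trans (le_of_eq himg.symm) ?_
    apply Finset.sum_le_sum_of_subset_of_nonneg
    · intro p hp
      rw [Finset.mem_image] at hp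
      obtain ⟨z, hz, rfl⟩ := hp
      rw [Zset, Finset.mem_filter, Finset.mem_Icc] at hz
      obtain ⟨⟨hz1, hzN⟩, hzfree⟩ := hz
      have hz0 : z ≠ 0 := by omega
      have hmdvd : mT j z ∣ z :=
        dvd_trans (dvd_pow_self _ (by omega : j ≠ 0)) ⟨zT j z, (zT_mul j z hz0).symm⟩
      have hzdvd : zT j z ∣ z := Dvd.intro_left _ (zT_mul j z hz0)
      rw [Finset.mem_product]
      constructor
      · rw [Finset.mem_Icc]
        exact ⟨(mT_pos j z), Nat.le_trans (Nat.le_of_dvd (by omega) hmdvd) hzN⟩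
      · rw [Zset, Finset.mem_filter, Finset.mem_Icc]
        exact ⟨⟨zT_pos j z hz0, Nat.le_trans (Nat.le_of_dvd (by omega) hzdvd) hzN⟩,
          zT_free j z hj hz0 hzfree⟩
    · intro p _ _; positivity
  refine key.trans ?_
  rw [Finset.sum_product]
  have : ∀ m ∈ Finset.Icc 1 N, ∑ z ∈ Zset j N, (1:ℝ)/(m:ℝ) * (1/radical z)
      = (1:ℝ)/(m:ℝ) * G j N := by
    intro m _
    rw [G, Finset.mul_sum]
  rw [Finset.sum_congr rfl this, ← Finset.sum_mul]
  exact mul_le_mul_of_nonneg_right (sum_inv_le N) (G_nonneg j N)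

lemma G_pow (i N : ℕ) (hN : 1 ≤ N) : G (i + 1) N ≤ (1 + Real.log N) ^ i := by
  induction i with
  | zero => simpa using G_one N
  | succ i ih =>
      have hlog : 0 ≤ Real.log N := Real.log_natCast_nonneg N
      calc G (i + 1 + 1) N ≤ (1 + Real.log N) * G (i+1) N := G_step (i+1) N (by omega) hN
        _ ≤ (1 + Real.log N) * (1 + Real.log N) ^ i := by
            apply mul_le_mul_of_nonneg_left ih (by linarith)
        _ = (1 + Real.log N) ^ (i+1) := by ring

lemma main_bound (k N : ℕ) (hk : 2 ≤ k) (hN : 1 ≤ N) :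
    ∑ y ∈ (Finset.Icc 1 N).filter (fun y => ∀ p : ℕ, p.Prime → ¬ p ^ k ∣ y),
      (y : ℝ) ^ (1 / (k : ℝ)) / (radical y : ℝ)
      ≤ (k : ℝ) * (N : ℝ) ^ (1 / (k : ℝ)) * (1 + Real.log N) ^ (k - 2) := by
  classical
  set j := k - 1 with hjdef
  have hj1 : 1 ≤ j := by omega
  have hjk : j + 1 = k := by omega
  have hkR : (0:ℝ) < (k:ℝ) := by positivity
  have hjR : (0:ℝ) < (j:ℝ) := by exact_mod_cast (by omega : 0 < j)
  have hjcast : (j:ℝ) = (k:ℝ) - 1 := by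
    have : ((j:ℕ):ℝ) + 1 = ((k:ℕ):ℝ) := by exact_mod_cast congrArg (Nat.cast (R := ℝ)) hjk
    linarith
  set A := (Finset.Icc 1 N).filter (fun y => ∀ p : ℕ, p.Prime → ¬ p ^ k ∣ y) with hA
  set s : ℕ → ℕ → ℝ := fun z m =>
    (m:ℝ) ^ (-(1/(k:ℝ))) * ((z:ℝ) ^ (1/(k:ℝ)) / (radical z : ℝ)) with hs
  set T := (Zset j N).sigma
    (fun z => (Finset.Icc 1 N).filter (fun m => m ^ j * z ≤ N)) with hT
  -- facts about elements of A
  have hA0 : ∀ y ∈ A, y ≠ 0 := by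
    intro y hy
    have := (Finset.mem_Icc.1 (Finset.mem_filter.1 hy).1).1; omega
  -- step 1 : the sum equals sum of s over the image
  have hterm : ∀ y ∈ A, (y : ℝ) ^ (1 / (k : ℝ)) / (radical y : ℝ)
      = s (zT j y) (mT j y) := by
    intro y hy
    have hy0 := hA0 y hy
    have hm0 : (0:ℝ) < (mT j y : ℝ) := by exact_mod_cast mT_pos j y
    have hz0 : (0:ℝ) < (zT j y : ℝ) := by exact_mod_cast zT_pos j y hy0
    have hr0 : (0:ℝ) < (radical (zT j y) : ℝ) := by exact_mod_cast radical_pos (zT j y)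
    have hyd : (y:ℝ) = (mT j y : ℝ) ^ (j:ℕ) * (zT j y : ℝ) := by
      exact_mod_cast congrArg (Nat.cast (R := ℝ)) (zT_mul j y hy0).symm
    have hrd : (radical y : ℝ) = (mT j y : ℝ) * (radical (zT j y) : ℝ) := by
      exact_mod_cast congrArg (Nat.cast (R := ℝ)) (radical_split j y hy0)
    rw [hyd, hrd, Real.mul_rpow (by positivity) hz0.le]
    rw [← Real.rpow_natCast (mT j y : ℝ) j, ← Real.rpow_mul hm0.le]
    have hmm : (mT j y : ℝ) ^ (-(1/(k:ℝ))) * (mT j y : ℝ)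
        = (mT j y : ℝ) ^ ((j:ℝ) * (1/(k:ℝ))) := by
      nth_rewrite 2 [← Real.rpow_one (mT j y : ℝ)]
      rw [← Real.rpow_add hm0, hjcast]
      congr 1
      field_simp
      ring
    rw [hs]
    simp only
    rw [div_eq_iff (by positivity), ← hmm]
    field_simp
  rw [Finset.sum_congr rfl hterm]
  -- step 2 : injectivity and image
  have hinj : ∀ y ∈ A, ∀ y' ∈ A, (⟨zT j y, mT j y⟩ : Σ _ : ℕ, ℕ) = ⟨zT j y', mT j y'⟩ → y = y' := by
    intro y hy y' hy' hEq
    have e1 : zT j y = zT j y' := congrArg Sigma.fst hEq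
    have e2 : mT j y = mT j y' := by
      have := (Sigma.mk.inj_iff.1 hEq).2
      exact eq_of_heq this
    rw [← zT_mul j y (hA0 y hy), ← zT_mul j y' (hA0 y' hy'), e1, e2]
  have himg := Finset.sum_image (s := A)
    (f := fun p : Σ _ : ℕ, ℕ => s p.1 p.2)
    (g := fun y => (⟨zT j y, mT j y⟩ : Σ _ : ℕ, ℕ)) hinj
  refine le_trans (le_of_eq himg.symm) ?_
  -- step 3 : image is inside T
  have hsub : A.image (fun y => (⟨zT j y, mT j y⟩ : Σ _ : ℕ, ℕ)) ⊆ T := by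
    intro p hp
    rw [Finset.mem_image] at hp
    obtain ⟨y, hy, rfl⟩ := hp
    have hy0 := hA0 y hy
    obtain ⟨hyI, hyfree⟩ := Finset.mem_filter.1 hy
    obtain ⟨hy1, hyN⟩ := Finset.mem_Icc.1 hyI
    have hmul := zT_mul j y hy0
    have hzdvd : zT j y ∣ y := Dvd.intro_left _ hmul
    have hfree' : ∀ p : ℕ, p.Prime → ¬ p ^ (j+1) ∣ y := by rw [hjk]; exact hyfree
    rw [hT, Finset.mem_sigma]
    constructor
    · rw [Zset, Finset.mem_filter, Finset.mem_Icc]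
      exact ⟨⟨zT_pos j y hy0, le_trans (Nat.le_of_dvd (by omega) hzdvd) hyN⟩,
        zT_free j y hj1 hy0 hfree'⟩
    · rw [Finset.mem_filter, Finset.mem_Icc]
      have hmdvd : mT j y ∣ y :=
        dvd_trans (dvd_pow_self _ (by omega : j ≠ 0)) ⟨zT j y, hmul.symm⟩
      refine ⟨⟨mT_pos j y, le_trans (Nat.le_of_dvd (by omega) hmdvd) hyN⟩, ?_⟩
      rw [hmul]; exact hyN
  refine le_trans (Finset.sum_le_sum_of_subset_of_nonneg hsub (fun p _ _ => by
    rw [hs]; positivity)) ?_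
  -- step 4 : iterated sum and inner bound
  rw [hT, Finset.sum_sigma]
  have hinner : ∀ z ∈ Zset j N,
      ∑ m ∈ (Finset.Icc 1 N).filter (fun m => m ^ j * z ≤ N), s z m
        ≤ (k : ℝ) * (N:ℝ) ^ (1/(k:ℝ)) * (1 / (radical z : ℝ)) := by
    intro z hz
    obtain ⟨hzI, _⟩ := Finset.mem_filter.1 hz
    obtain ⟨hz1, hzN⟩ := Finset.mem_Icc.1 hzI
    have hz0 : (0:ℝ) < (z:ℝ) := by exact_mod_cast (by omega : 0 < z)
    have hNz0 : (0:ℝ) < (N:ℝ)/(z:ℝ) := by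
      apply div_pos (by exact_mod_cast (by omega : 0 < N)) hz0
    set M := ⌊((N:ℝ)/(z:ℝ)) ^ (1/(j:ℝ))⌋₊ with hM
    have hsubM : (Finset.Icc 1 N).filter (fun m => m ^ j * z ≤ N) ⊆ Finset.Icc 1 M := by
      intro m hm
      obtain ⟨hmI, hmc⟩ := Finset.mem_filter.1 hm
      obtain ⟨hm1, _⟩ := Finset.mem_Icc.1 hmI
      have hmR : (0:ℝ) < (m:ℝ) := by exact_mod_cast (by omega : 0 < m)
      have hpow : ((m:ℝ)) ^ (j:ℕ) ≤ (N:ℝ)/(z:ℝ) := by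
        rw [le_div_iff₀ hz0]
        exact_mod_cast hmc
      have hmle : (m:ℝ) ≤ ((N:ℝ)/(z:ℝ)) ^ (1/(j:ℝ)) := by
        calc (m:ℝ) = (((m:ℝ) ^ (j:ℕ)) : ℝ) ^ (1/(j:ℝ)) := by
              rw [← Real.rpow_natCast (m:ℝ) j, ← Real.rpow_mul hmR.le]
              rw [mul_one_div, div_self hjR.ne', Real.rpow_one]
          _ ≤ ((N:ℝ)/(z:ℝ)) ^ (1/(j:ℝ)) := by
              apply Real.rpow_le_rpow (by positivity) hpow (by positivity)
      rw [Finset.mem_Icc]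
      exact ⟨hm1, Nat.le_floor hmle⟩
    have hs_eq : ∀ m : ℕ, s z m = (m:ℝ) ^ ((1 - 1/(k:ℝ)) - 1) * ((z:ℝ) ^ (1/(k:ℝ)) / (radical z : ℝ)) := by
      intro m
      rw [hs]
      norm_num
    calc ∑ m ∈ (Finset.Icc 1 N).filter (fun m => m ^ j * z ≤ N), s z m
        ≤ ∑ m ∈ Finset.Icc 1 M, s z m := by
          apply Finset.sum_le_sum_of_subset_of_nonneg hsubM
          intro m _ _
          rw [hs]; positivity
      _ = (∑ m ∈ Finset.Icc 1 M, (m:ℝ) ^ ((1 - 1/(k:ℝ)) - 1)) * ((z:ℝ) ^ (1/(k:ℝ)) / (radical z : ℝ)) := by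
          rw [← Finset.sum_mul]
          congr 1
          apply Finset.sum_congr rfl
          intro m _
          norm_num
      _ ≤ ((k:ℝ) * (M:ℝ) ^ (1 - 1/(k:ℝ))) * ((z:ℝ) ^ (1/(k:ℝ)) / (radical z : ℝ)) := by
          apply mul_le_mul_of_nonneg_right _ (by positivity)
          have h2k : (2:ℝ) ≤ (k:ℝ) := by exact_mod_cast hk
          have hik : 1/(k:ℝ) ≤ 1/2 :=
            one_div_le_one_div_of_le (by norm_num) h2k
          refine sum_rpow_le' (1 - 1/(k:ℝ)) (k:ℝ) (by linarith) (by
            have : (0:ℝ) < 1/(k:ℝ) := by positivity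
            linarith) (by field_simp; ring) M
      _ ≤ (k : ℝ) * (N:ℝ) ^ (1/(k:ℝ)) * (1 / (radical z : ℝ)) := by
          have hk1 : (k:ℝ) - 1 ≠ 0 := by
            have h2k : (2:ℝ) ≤ (k:ℝ) := by exact_mod_cast hk
            linarith
          have hMle : (M:ℝ) ≤ ((N:ℝ)/(z:ℝ)) ^ (1/(j:ℝ)) := Nat.floor_le (by positivity)
          have h1 : (M:ℝ) ^ (1 - 1/(k:ℝ)) ≤ ((N:ℝ)/(z:ℝ)) ^ (1/(k:ℝ)) := by
            calc (M:ℝ) ^ (1 - 1/(k:ℝ))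
                ≤ (((N:ℝ)/(z:ℝ)) ^ (1/(j:ℝ))) ^ (1 - 1/(k:ℝ)) := by
                  apply Real.rpow_le_rpow (by positivity) hMle
                  have : (0:ℝ) < 1/(k:ℝ) := by positivity
                  have h2k : (2:ℝ) ≤ (k:ℝ) := by exact_mod_cast hk
                  have hik : 1/(k:ℝ) ≤ 1/2 :=
                    one_div_le_one_div_of_le (by norm_num) h2k
                  linarith
              _ = ((N:ℝ)/(z:ℝ)) ^ (1/(k:ℝ)) := by
                  rw [← Real.rpow_mul hNz0.le]
                  congr 1
                  rw [hjcast]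
                  field_simp
          have h2 : ((N:ℝ)/(z:ℝ)) ^ (1/(k:ℝ)) * (z:ℝ) ^ (1/(k:ℝ)) = (N:ℝ) ^ (1/(k:ℝ)) := by
            rw [Real.div_rpow (by positivity) hz0.le]
            have : (z:ℝ) ^ (1/(k:ℝ)) ≠ 0 := by positivity
            field_simp
          calc ((k:ℝ) * (M:ℝ) ^ (1 - 1/(k:ℝ))) * ((z:ℝ) ^ (1/(k:ℝ)) / (radical z : ℝ))
              ≤ ((k:ℝ) * ((N:ℝ)/(z:ℝ)) ^ (1/(k:ℝ))) * ((z:ℝ) ^ (1/(k:ℝ)) / (radical z : ℝ)) := by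
                apply mul_le_mul_of_nonneg_right
                  (mul_le_mul_of_nonneg_left h1 (by positivity)) (by positivity)
            _ = (k : ℝ) * (N:ℝ) ^ (1/(k:ℝ)) * (1 / (radical z : ℝ)) := by
                have hrne : (radical z : ℝ) ≠ 0 := by
                  have := radical_pos z
                  positivity
                field_simp
                linear_combination h2
  calc ∑ z ∈ Zset j N, ∑ m ∈ (Finset.Icc 1 N).filter (fun m => m ^ j * z ≤ N), s z m
      ≤ ∑ z ∈ Zset j N, (k : ℝ) * (N:ℝ) ^ (1/(k:ℝ)) * (1 / (radical z : ℝ)) :=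
        Finset.sum_le_sum hinner
    _ = (k : ℝ) * (N:ℝ) ^ (1/(k:ℝ)) * G j N := by
        rw [G, Finset.mul_sum]
    _ ≤ (k : ℝ) * (N:ℝ) ^ (1/(k:ℝ)) * (1 + Real.log N) ^ (k-2) := by
        apply mul_le_mul_of_nonneg_left _ (by positivity)
        have : j = (k - 2) + 1 := by omega
        rw [this]
        exact G_pow (k-2) N hN

theorem W_bigO (k : ℕ) (hk : 2 ≤ k) :
    (fun H : ℝ =>
        ∑ y ∈ (Finset.Icc 1 ⌊H⌋₊).filter
            (fun y : ℕ => (∀ p : ℕ, p.Prime → ¬ p ^ k ∣ y) ∧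
              ((radical y : ℝ)) ^ k ≤ H * y),
          (y : ℝ) ^ (1 / (k : ℝ)) / (radical y))
      =O[atTop] fun H : ℝ => H ^ (1 / (k : ℝ)) * (Real.log H) ^ (k - 2) := by
  rw [Asymptotics.isBigO_iff]
  refine ⟨(k:ℝ) * 2 ^ (k-2), ?_⟩
  filter_upwards [eventually_ge_atTop (3:ℝ)] with H hH
  have hH0 : (0:ℝ) < H := by linarith
  set N := ⌊H⌋₊ with hNdef
  have hN1 : 1 ≤ N := Nat.le_floor (by norm_num; linarith)
  have hNH : (N:ℝ) ≤ H := Nat.floor_le hH0.le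
  have hN0 : (0:ℝ) < (N:ℝ) := by exact_mod_cast (by omega : 0 < N)
  have hlog1 : 1 ≤ Real.log H := by
    rw [Real.le_log_iff_exp_le hH0]
    have := Real.exp_one_lt_d9
    linarith
  have hlogN : 0 ≤ Real.log N := Real.log_natCast_nonneg N
  have hlogNH : Real.log N ≤ Real.log H := Real.log_le_log hN0 hNH
  set S := ∑ y ∈ (Finset.Icc 1 N).filter
      (fun y : ℕ => (∀ p : ℕ, p.Prime → ¬ p ^ k ∣ y) ∧
        ((radical y : ℝ)) ^ k ≤ H * y),
      (y : ℝ) ^ (1 / (k : ℝ)) / (radical y : ℝ) with hS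
  have hS0 : 0 ≤ S := by
    rw [hS]
    apply Finset.sum_nonneg
    intro y _
    positivity
  have step1 : S ≤ ∑ y ∈ (Finset.Icc 1 N).filter
      (fun y : ℕ => ∀ p : ℕ, p.Prime → ¬ p ^ k ∣ y),
      (y : ℝ) ^ (1 / (k : ℝ)) / (radical y : ℝ) := by
    rw [hS]
    apply Finset.sum_le_sum_of_subset_of_nonneg
    · intro y hy
      rw [Finset.mem_filter] at hy ⊢
      exact ⟨hy.1, hy.2.1⟩
    · intro y _ _
      positivity
  have step2 := main_bound k N hk hN1
  have hrpow : (N:ℝ) ^ (1/(k:ℝ)) ≤ H ^ (1/(k:ℝ)) :=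
    Real.rpow_le_rpow (by positivity) hNH (by positivity)
  have hpow : (1 + Real.log N) ^ (k-2) ≤ (2 * Real.log H) ^ (k-2) := by
    apply pow_le_pow_left₀ (by linarith)
    linarith
  have chain : S ≤ (k:ℝ) * 2 ^ (k-2) * (H ^ (1/(k:ℝ)) * (Real.log H) ^ (k-2)) := by
    calc S ≤ (k : ℝ) * (N : ℝ) ^ (1 / (k : ℝ)) * (1 + Real.log N) ^ (k - 2) :=
          step1.trans step2
      _ ≤ (k : ℝ) * H ^ (1 / (k : ℝ)) * (2 * Real.log H) ^ (k - 2) := by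
          apply mul_le_mul
          · exact mul_le_mul_of_nonneg_left hrpow (by positivity)
          · exact hpow
          · positivity
          · positivity
      _ = (k:ℝ) * 2 ^ (k-2) * (H ^ (1/(k:ℝ)) * (Real.log H) ^ (k-2)) := by
          rw [mul_pow]
          ring
  rw [Real.norm_eq_abs, Real.norm_eq_abs, abs_of_nonneg hS0, abs_of_nonneg (by positivity)]
  exact chain
end

section
/- For k ≥ 2 and complex s, w with Re(s) > 0 and Re(w) > 0, the series Σ_{y k-free} y^{s−w} η(y)^{−ks−1} converges absolutely and equals Π_p (1 + Σ_{j=1}^{k−1} p^{−(k−j)s − jw − 1}). -/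
open scoped Classical

/-- The summand of the series. -/
noncomputable def Mf (k : ℕ) (s w : ℂ) (y : ℕ) : ℂ :=
  if 0 < y ∧ ∀ p : ℕ, p.Prime → ¬ p ^ k ∣ y then
    (y : ℂ) ^ (s - w) * ((radical y : ℕ) : ℂ) ^ (-(k : ℂ) * s - 1)
  else 0

lemma radical_one : radical 1 = 1 := by simp [radical]

lemma radical_mul_coprime {m n : ℕ} (hm : m ≠ 0) (hn : n ≠ 0) (h : Nat.Coprime m n) :
    radical (m * n) = radical m * radical n := by
  unfold radical
  rw [Nat.primeFactors_mul hm hn, Finset.prod_union h.disjoint_primeFactors]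

lemma Mf_zero (k : ℕ) (s w : ℂ) : Mf k s w 0 = 0 := by simp [Mf]

lemma Mf_one (k : ℕ) (hk : 2 ≤ k) (s w : ℂ) : Mf k s w 1 = 1 := by
  rw [Mf, if_pos, radical_one]
  · simp
  · refine ⟨one_pos, fun p hp hd => ?_⟩
    have h1 : p ^ k = 1 := Nat.dvd_one.mp hd
    have h2 : 2 ≤ p := hp.two_le
    have h3 : p ≤ p ^ k := Nat.le_self_pow (by omega) p
    omega

lemma Mf_mul (k : ℕ) (hk : 2 ≤ k) (s w : ℂ) {m n : ℕ} (h : Nat.Coprime m n) :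
    Mf k s w (m * n) = Mf k s w m * Mf k s w n := by
  rcases Nat.eq_zero_or_pos m with hm | hm
  · subst hm; simp [Mf]
  rcases Nat.eq_zero_or_pos n with hn | hn
  · subst hn; simp [Mf]
  by_cases H : ∀ p : ℕ, p.Prime → ¬ p ^ k ∣ m * n
  · have Hm : ∀ p : ℕ, p.Prime → ¬ p ^ k ∣ m := fun p hp hd => H p hp (hd.mul_right n)
    have Hn : ∀ p : ℕ, p.Prime → ¬ p ^ k ∣ n := fun p hp hd => H p hp (hd.mul_left m)
    rw [Mf, Mf, Mf, if_pos ⟨Nat.mul_pos hm hn, H⟩, if_pos ⟨hm, Hm⟩, if_pos ⟨hn, Hn⟩,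
      radical_mul_coprime hm.ne' hn.ne' h]
    push_cast
    rw [Complex.natCast_mul_natCast_cpow, Complex.natCast_mul_natCast_cpow]
    ring
  · push_neg at H
    obtain ⟨p, hp, hd⟩ := H
    have hmul0 : Mf k s w (m * n) = 0 := by
      rw [Mf, if_neg]; rintro ⟨-, H'⟩; exact H' p hp hd
    have hpmn : p ∣ m * n := (dvd_pow_self p (by omega : k ≠ 0)).trans hd
    rcases hp.dvd_mul.mp hpmn with hpm | hpn
    · have hc : Nat.Coprime (p ^ k) n := (Nat.Coprime.coprime_dvd_left hpm h).pow_left k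
      have hdm : p ^ k ∣ m := hc.dvd_of_dvd_mul_right hd
      have h0 : Mf k s w m = 0 := by
        rw [Mf, if_neg]; rintro ⟨-, H'⟩; exact H' p hp hdm
      rw [hmul0, h0, zero_mul]
    · have hc : Nat.Coprime (p ^ k) m :=
        ((Nat.Coprime.coprime_dvd_right hpn h).symm).pow_left k
      have hdn : p ^ k ∣ n := hc.dvd_of_dvd_mul_left hd
      have h0 : Mf k s w n = 0 := by
        rw [Mf, if_neg]; rintro ⟨-, H'⟩; exact H' p hp hdn
      rw [hmul0, h0, mul_zero]

lemma Mf_prime_pow (k : ℕ) (hk : 2 ≤ k) (s w : ℂ) {p : ℕ} (hp : p.Prime) (e : ℕ) :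
    Mf k s w (p ^ e) =
      if e = 0 then 1 else if e < k then
        (p : ℂ) ^ (-(((k : ℂ) - (e : ℂ)) * s) - (e : ℂ) * w - 1) else 0 := by
  rcases eq_or_ne e 0 with rfl | he
  · simpa using Mf_one k hk s w
  rw [if_neg he]
  by_cases hek : e < k
  · rw [if_pos hek, Mf, if_pos, show radical (p ^ e) = p by
      rw [radical, Nat.primeFactors_pow p he, hp.primeFactors, Finset.prod_singleton]]
    · have hp0 : (p : ℂ) ≠ 0 := Nat.cast_ne_zero.mpr hp.pos.ne'
      rw [Nat.cast_pow, ← Complex.natCast_cpow_natCast_mul,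
        ← Complex.cpow_add _ _ hp0]
      congr 1
      ring
    · refine ⟨pow_pos hp.pos e, fun q hq hdq => ?_⟩
      have hqp : q ∣ p := hq.dvd_of_dvd_pow
        ((dvd_pow_self q (by omega : k ≠ 0)).trans hdq)
      have : q = p := (Nat.prime_dvd_prime_iff_eq hq hp).mp hqp
      subst this
      have := (Nat.pow_dvd_pow_iff_le_right hp.one_lt).mp hdq
      omega
  · rw [if_neg hek, Mf, if_neg]
    rintro ⟨-, H'⟩
    exact H' p hp (pow_dvd_pow p (by omega))

lemma norm_Mf_prime_pow (k : ℕ) (hk : 2 ≤ k) (s w : ℂ) {p : ℕ} (hp : p.Prime) (e : ℕ) :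
    ‖Mf k s w (p ^ e)‖ =
      if e = 0 then 1 else if e < k then
        (p : ℝ) ^ ((-(((k : ℂ) - (e : ℂ)) * s) - (e : ℂ) * w - 1).re) else 0 := by
  rw [Mf_prime_pow k hk s w hp e]
  split_ifs <;> simp [Complex.norm_natCast_cpow_of_pos hp.pos]

lemma range_eq_insert (k : ℕ) (hk : 2 ≤ k) :
    Finset.range k = insert 0 (Finset.Icc 1 (k - 1)) := by
  ext x
  simp only [Finset.mem_range, Finset.mem_insert, Finset.mem_Icc]
  omega

lemma Mf_tsum_prime (k : ℕ) (hk : 2 ≤ k) (s w : ℂ) {p : ℕ} (hp : p.Prime) :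
    ∑' e : ℕ, Mf k s w (p ^ e) =
      1 + ∑ j ∈ Finset.Icc 1 (k - 1),
        (p : ℂ) ^ (-(((k : ℂ) - (j : ℂ)) * s) - (j : ℂ) * w - 1) := by
  have hvan : ∀ e ∉ Finset.range k, Mf k s w (p ^ e) = 0 := by
    intro e he
    rw [Finset.mem_range, not_lt] at he
    rw [Mf_prime_pow k hk s w hp e, if_neg (by omega), if_neg (by omega)]
  rw [tsum_eq_sum hvan, range_eq_insert k hk, Finset.sum_insert (by simp)]
  congr 1
  · rw [Mf_prime_pow k hk s w hp 0, if_pos rfl]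
  · refine Finset.sum_congr rfl fun j hj => ?_
    rw [Finset.mem_Icc] at hj
    rw [Mf_prime_pow k hk s w hp j, if_neg (by omega), if_pos (by omega)]

lemma Mf_norm_summable (k : ℕ) (hk : 2 ≤ k) (s w : ℂ)
    (hs : 0 < s.re) (hw : 0 < w.re) :
    Summable fun y : ℕ => ‖Mf k s w y‖ := by
  set ε := min s.re w.re with hεdef
  have hε : 0 < ε := lt_min hs hw
  have hC : Summable (fun n : ℕ => (n : ℝ) ^ (-(1 + ε))) :=
    Real.summable_nat_rpow.mpr (by linarith)
  set C := ∑' n : ℕ, (n : ℝ) ^ (-(1 + ε)) with hCdef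
  have hk1 : (2 : ℝ) ≤ (k : ℝ) := by exact_mod_cast hk
  have hvan : ∀ {p : ℕ}, p.Prime → ∀ e ∉ Finset.range k, ‖Mf k s w (p ^ e)‖ = 0 := by
    intro p hp e he
    rw [Finset.mem_range, not_lt] at he
    rw [norm_Mf_prime_pow k hk s w hp e, if_neg (by omega), if_neg (by omega)]
  have hfac : ∀ {p : ℕ}, p.Prime →
      ∑' e : ℕ, ‖Mf k s w (p ^ e)‖ ≤ 1 + ((k : ℝ) - 1) * (p : ℝ) ^ (-(1 + ε)) := by
    intro p hp
    have hterm : ∀ e ∈ Finset.Icc 1 (k - 1), ‖Mf k s w (p ^ e)‖ ≤ (p : ℝ) ^ (-(1 + ε)) := by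
      intro e he
      rw [Finset.mem_Icc] at he
      rw [norm_Mf_prime_pow k hk s w hp e, if_neg (by omega), if_pos (by omega)]
      apply Real.rpow_le_rpow_of_exponent_le (by exact_mod_cast hp.one_lt.le)
      have hre : (-(((k : ℂ) - (e : ℂ)) * s) - (e : ℂ) * w - 1).re
          = -(((k : ℝ) - (e : ℝ)) * s.re) - (e : ℝ) * w.re - 1 := by
        simp [Complex.sub_re, Complex.neg_re, Complex.mul_re, Complex.natCast_re,
          Complex.natCast_im, Complex.one_re]
      rw [hre]
      have he1 : (1 : ℝ) ≤ (e : ℝ) := by exact_mod_cast he.1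
      have hek : (e : ℝ) + 1 ≤ (k : ℝ) := by exact_mod_cast (by omega : e + 1 ≤ k)
      have h1 : (1 : ℝ) ≤ (k : ℝ) - (e : ℝ) := by linarith
      have h2 : ε ≤ s.re := min_le_left _ _
      have h3 : s.re * 1 ≤ s.re * ((k : ℝ) - (e : ℝ)) :=
        mul_le_mul_of_nonneg_left h1 hs.le
      have h4 : w.re * 1 ≤ w.re * (e : ℝ) := mul_le_mul_of_nonneg_left he1 hw.le
      nlinarith
    calc ∑' e : ℕ, ‖Mf k s w (p ^ e)‖
        = ∑ e ∈ Finset.range k, ‖Mf k s w (p ^ e)‖ := tsum_eq_sum (hvan hp)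
      _ = ‖Mf k s w (p ^ 0)‖ + ∑ e ∈ Finset.Icc 1 (k - 1), ‖Mf k s w (p ^ e)‖ := by
          rw [range_eq_insert k hk, Finset.sum_insert (by simp)]
      _ ≤ 1 + ((k : ℝ) - 1) * (p : ℝ) ^ (-(1 + ε)) := by
          have h0 : ‖Mf k s w (p ^ 0)‖ = 1 := by
            rw [norm_Mf_prime_pow k hk s w hp 0, if_pos rfl]
          rw [h0]
          have hcard : (Finset.Icc 1 (k - 1)).card = k - 1 := by
            rw [Nat.card_Icc]; omega
          have := Finset.sum_le_card_nsmul (Finset.Icc 1 (k - 1)) _ _ hterm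
          rw [hcard, nsmul_eq_mul] at this
          have hcast : ((k - 1 : ℕ) : ℝ) = (k : ℝ) - 1 := by
            push_cast [Nat.cast_sub (by omega : 1 ≤ k)]; ring
          rw [hcast] at this
          linarith
  have key : ∀ u : Finset ℕ, ∑ y ∈ u, ‖Mf k s w y‖ ≤ Real.exp (((k : ℝ) - 1) * C) := by
    intro u
    set N := u.sup id + 1 with hN
    obtain ⟨-, hP⟩ := EulerProduct.summable_and_hasSum_factoredNumbers_prod_filter_prime_tsum
      (f := fun y => ‖Mf k s w y‖)
      (by simp only [Mf_one k hk s w, norm_one])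
      (fun {m n} h => by simp only [Mf_mul k hk s w h, norm_mul])
      (fun {p} hp => by
        simpa only [norm_norm] using summable_of_ne_finset_zero (hvan hp))
      (Finset.range N)
    replace hP := (hasSum_subtype_iff_indicator
      (s := Nat.factoredNumbers (Finset.range N)) (f := fun y => ‖Mf k s w y‖)).mp hP
    have h1 : ∑ y ∈ u, ‖Mf k s w y‖
        = ∑ y ∈ u, Set.indicator (Nat.factoredNumbers (Finset.range N))
            (fun y => ‖Mf k s w y‖) y := by
      refine Finset.sum_congr rfl fun y hy => ?_
      rcases eq_or_ne y 0 with rfl | hy0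
      · simp [Mf_zero, Set.indicator_apply]
      · rw [Set.indicator_of_mem]
        rw [Nat.mem_factoredNumbers]
        refine ⟨hy0, fun q hq => Finset.mem_range.mpr ?_⟩
        have h2 : q ≤ y := Nat.le_of_mem_primeFactorsList hq
        have h3 : y ≤ u.sup id := Finset.le_sup (f := id) hy
        omega
    calc ∑ y ∈ u, ‖Mf k s w y‖
        = ∑ y ∈ u, Set.indicator (Nat.factoredNumbers (Finset.range N))
            (fun y => ‖Mf k s w y‖) y := h1
      _ ≤ ∏ p ∈ Finset.range N with p.Prime, ∑' e : ℕ, ‖Mf k s w (p ^ e)‖ :=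
          sum_le_hasSum u
            (fun i _ => Set.indicator_nonneg (fun _ _ => norm_nonneg _) i) hP
      _ ≤ ∏ p ∈ Finset.range N with p.Prime,
            Real.exp (((k : ℝ) - 1) * (p : ℝ) ^ (-(1 + ε))) := by
          refine Finset.prod_le_prod (fun p _ => tsum_nonneg fun e => norm_nonneg _)
            fun p hpmem => ?_
          have hpp : p.Prime := (Finset.mem_filter.mp hpmem).2
          refine le_trans (hfac hpp) ?_
          have := Real.add_one_le_exp (((k : ℝ) - 1) * (p : ℝ) ^ (-(1 + ε)))
          linarith
      _ = Real.exp (∑ p ∈ Finset.range N with p.Prime,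
            ((k : ℝ) - 1) * (p : ℝ) ^ (-(1 + ε))) := (Real.exp_sum _ _).symm
      _ ≤ Real.exp (((k : ℝ) - 1) * C) := by
          apply Real.exp_le_exp.mpr
          rw [← Finset.mul_sum]
          refine mul_le_mul_of_nonneg_left ?_ (by linarith)
          exact Summable.sum_le_tsum _ (fun n _ => Real.rpow_nonneg (Nat.cast_nonneg n) _) hC
  exact summable_of_sum_le (fun y => norm_nonneg _) key

theorem M_series_euler_product (k : ℕ) (hk : 2 ≤ k) (s w : ℂ)
    (hs : 0 < s.re) (hw : 0 < w.re) :
    Summable (fun y : ℕ =>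
        ‖if 0 < y ∧ ∀ p : ℕ, p.Prime → ¬ p ^ k ∣ y then
            (y : ℂ) ^ (s - w) * ((radical y : ℕ) : ℂ) ^ (-(k : ℂ) * s - 1)
          else 0‖) ∧
    ∃ P : ℂ,
      HasProd (fun p : Nat.Primes =>
        1 + ∑ j ∈ Finset.Icc 1 (k - 1),
          (((p : ℕ) : ℂ)) ^ (-(((k : ℂ) - (j : ℂ)) * s) - (j : ℂ) * w - 1)) P ∧
      HasSum (fun y : ℕ =>
        if 0 < y ∧ ∀ p : ℕ, p.Prime → ¬ p ^ k ∣ y then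
          (y : ℂ) ^ (s - w) * ((radical y : ℕ) : ℂ) ^ (-(k : ℂ) * s - 1)
        else 0) P := by
  have hsum := Mf_norm_summable k hk s w hs hw
  refine ⟨hsum, ∑' n : ℕ, Mf k s w n, ?_, ?_⟩
  · have hEuler := EulerProduct.eulerProduct_hasProd (f := Mf k s w)
      (Mf_one k hk s w) (fun {m n} h => Mf_mul k hk s w h) hsum (Mf_zero k s w)
    have heq : (fun p : Nat.Primes => ∑' e : ℕ, Mf k s w ((p : ℕ) ^ e)) =
        fun p : Nat.Primes => 1 + ∑ j ∈ Finset.Icc 1 (k - 1),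
          (((p : ℕ) : ℂ)) ^ (-(((k : ℂ) - (j : ℂ)) * s) - (j : ℂ) * w - 1) := by
      funext p
      exact Mf_tsum_prime k hk s w p.2
    rw [heq] at hEuler
    exact hEuler
  · exact hsum.of_norm.hasSum
end

section
/- For k ≥ 2 and complex s, w with Re(s) > 0 and Re(w) > 0, one has Σ_{y k-free} y^{s−w} η(y)^{−ks−1} = K(s,w) · Π_{j=1}^{k−1} ζ((k−j)s + jw + 1), where K(s,w) = Π_p { (1 + Σ_{j=1}^{k−1} p^{−(k−j)s−jw−1}) · Π_{j=1}^{k−1} (1 − p^{−(k−j)s−jw−1}) } converges absolutely. -/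
open scoped Classical

namespace MK

noncomputable def f (k : ℕ) (s w : ℂ) (y : ℕ) : ℂ :=
  if 0 < y ∧ ∀ p : ℕ, p.Prime → ¬ p ^ k ∣ y then
    (y : ℂ) ^ (s - w) * ((radical y : ℕ) : ℂ) ^ (-(k : ℂ) * s - 1)
  else 0

lemma f_zero (k : ℕ) (s w : ℂ) : f k s w 0 = 0 := by simp [f]

lemma f_one (k : ℕ) (hk : 2 ≤ k) (s w : ℂ) : f k s w 1 = 1 := by
  rw [f, if_pos]
  · simp [radical]
  · refine ⟨one_pos, fun p hp h => ?_⟩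
    have h1 : p ^ k ≤ 1 := Nat.le_of_dvd one_pos h
    have h2 : p ≤ p ^ k := Nat.le_self_pow (by omega) p
    have := hp.two_le
    omega

lemma cond_mul {k m n : ℕ} (h : Nat.Coprime m n) :
    (0 < m * n ∧ ∀ p : ℕ, p.Prime → ¬ p ^ k ∣ m * n) ↔
      (0 < m ∧ ∀ p : ℕ, p.Prime → ¬ p ^ k ∣ m) ∧
        (0 < n ∧ ∀ p : ℕ, p.Prime → ¬ p ^ k ∣ n) := by
  constructor
  · rintro ⟨hpos, hfree⟩
    have hm : m ≠ 0 := by rintro rfl; simp at hpos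
    have hn : n ≠ 0 := by rintro rfl; simp at hpos
    exact ⟨⟨Nat.pos_of_ne_zero hm, fun p hp hd => hfree p hp (hd.mul_right n)⟩,
      ⟨Nat.pos_of_ne_zero hn, fun p hp hd => hfree p hp (hd.mul_left m)⟩⟩
  · rintro ⟨⟨hm, hfm⟩, ⟨hn, hfn⟩⟩
    refine ⟨Nat.mul_pos hm hn, fun p hp hd => ?_⟩
    have hk0 : k ≠ 0 := by
      rintro rfl
      exact hfm 2 Nat.prime_two (one_dvd m)
    have hpd : p ∣ m * n := (dvd_pow_self p hk0).trans hd
    rcases (Nat.Prime.dvd_mul hp).mp hpd with hpm | hpn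
    · have hcop : Nat.Coprime (p ^ k) n := (Nat.Coprime.coprime_dvd_left hpm h).pow_left k
      exact hfm p hp (hcop.dvd_of_dvd_mul_right hd)
    · have hcop : Nat.Coprime (p ^ k) m := (Nat.Coprime.coprime_dvd_left hpn h.symm).pow_left k
      exact hfn p hp (hcop.dvd_of_dvd_mul_left hd)

lemma radical_mul {m n : ℕ} (hm : m ≠ 0) (hn : n ≠ 0) (h : Nat.Coprime m n) :
    radical (m * n) = radical m * radical n := by
  rw [radical, radical, radical, Nat.primeFactors_mul hm hn,
    Finset.prod_union (Nat.Coprime.disjoint_primeFactors h)]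

lemma natCast_mul_cpow (m n : ℕ) (r : ℂ) :
    ((m * n : ℕ) : ℂ) ^ r = (m : ℂ) ^ r * (n : ℂ) ^ r := by
  have := Complex.mul_cpow_ofReal_nonneg (Nat.cast_nonneg m) (Nat.cast_nonneg n) r
  push_cast at this ⊢
  exact this

lemma f_mul (k : ℕ) (s w : ℂ) {m n : ℕ} (h : Nat.Coprime m n) :
    f k s w (m * n) = f k s w m * f k s w n := by
  by_cases hC : (0 < m ∧ ∀ p : ℕ, p.Prime → ¬ p ^ k ∣ m) ∧
      (0 < n ∧ ∀ p : ℕ, p.Prime → ¬ p ^ k ∣ n)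
  · rw [f, f, f, if_pos ((cond_mul h).mpr hC), if_pos hC.1, if_pos hC.2,
      radical_mul hC.1.1.ne' hC.2.1.ne' h, natCast_mul_cpow, natCast_mul_cpow]
    ring
  · rw [f, f, f, if_neg (fun hh => hC ((cond_mul h).mp hh))]
    rcases not_and_or.mp hC with hCm | hCn
    · rw [if_neg hCm]; ring
    · rw [if_neg hCn]; ring

lemma f_prime_pow_eq_zero {k p e : ℕ} (hp : p.Prime) (he : k ≤ e) (s w : ℂ) :
    f k s w (p ^ e) = 0 := by
  rw [f, if_neg]
  rintro ⟨-, hfree⟩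
  exact hfree p hp (pow_dvd_pow p he)

lemma radical_prime_pow {p j : ℕ} (hp : p.Prime) (hj : j ≠ 0) :
    radical (p ^ j) = p := by
  rw [radical, Nat.primeFactors_prime_pow hj hp, Finset.prod_singleton]

lemma f_prime_pow {k p j : ℕ} (hk : 2 ≤ k) (hp : p.Prime) (hj : j ∈ Finset.Icc 1 (k - 1))
    (s w : ℂ) :
    f k s w (p ^ j) = (p : ℂ) ^ (-(((k : ℂ) - (j : ℂ)) * s) - (j : ℂ) * w - 1) := by
  rw [Finset.mem_Icc] at hj
  have hj1 : 1 ≤ j := hj.1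
  have hjk : j < k := by omega
  rw [f, if_pos]
  · rw [radical_prime_pow hp (by omega)]
    have hcast : ((p ^ j : ℕ) : ℂ) = (p : ℂ) ^ j := by push_cast; ring
    rw [hcast, ← Complex.natCast_cpow_natCast_mul p j (s - w),
      ← Complex.cpow_add _ _ (by exact_mod_cast hp.pos.ne' : (p : ℂ) ≠ 0)]
    rw [show (j : ℂ) * (s - w) + (-(k : ℂ) * s - 1)
        = -(((k : ℂ) - (j : ℂ)) * s) - (j : ℂ) * w - 1 by ring]
  · refine ⟨Nat.pow_pos hp.pos, fun q hq hd => ?_⟩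
    have hqd : q ∣ p ^ j := (dvd_pow_self q (by omega : k ≠ 0)).trans hd
    have hqp : q = p := (Nat.prime_dvd_prime_iff_eq hq hp).mp (hq.dvd_of_dvd_pow hqd)
    subst hqp
    have := (Nat.pow_dvd_pow_iff_le_right hp.one_lt).mp hd
    omega

lemma euler_factor {k p : ℕ} (hk : 2 ≤ k) (hp : p.Prime) (s w : ℂ) :
    ∑' e : ℕ, f k s w (p ^ e)
      = 1 + ∑ j ∈ Finset.Icc 1 (k - 1),
          (p : ℂ) ^ (-(((k : ℂ) - (j : ℂ)) * s) - (j : ℂ) * w - 1) := by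
  have hset : insert 0 (Finset.Icc 1 (k - 1)) = Finset.range k := by
    ext x
    simp only [Finset.mem_insert, Finset.mem_Icc, Finset.mem_range]
    omega
  rw [tsum_eq_sum (s := insert 0 (Finset.Icc 1 (k - 1)))
    (fun e he => f_prime_pow_eq_zero hp (by rw [hset] at he; simpa using he) s w)]
  rw [Finset.sum_insert (by simp)]
  congr 1
  · rw [pow_zero]
    exact f_one k hk s w
  · exact Finset.sum_congr rfl fun j hj => f_prime_pow hk hp hj s w

lemma norm_f_prime_pow_le {k p j : ℕ} (hk : 2 ≤ k) (hp : p.Prime)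
    (hj : j ∈ Finset.Icc 1 (k - 1)) {s w : ℂ} (hs : 0 < s.re) (hw : 0 < w.re) :
    ‖f k s w (p ^ j)‖ ≤ (p : ℝ) ^ (-(1 + min s.re w.re)) := by
  rw [f_prime_pow hk hp hj, Complex.norm_natCast_cpow_of_pos hp.pos]
  apply Real.rpow_le_rpow_of_exponent_le (by exact_mod_cast hp.one_lt.le)
  rw [Finset.mem_Icc] at hj
  have h1 : (1 : ℝ) ≤ (j : ℝ) := by exact_mod_cast hj.1
  have h2 : (j : ℝ) + 1 ≤ (k : ℝ) := by exact_mod_cast (by omega : j + 1 ≤ k)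
  have hm1 : min s.re w.re ≤ s.re := min_le_left _ _
  have hA : ((k : ℝ) - (j : ℝ) - 1) * s.re ≥ 0 := mul_nonneg (by linarith) hs.le
  have hB : ((j : ℝ) - 1) * w.re ≥ 0 := mul_nonneg (by linarith) hw.le
  simp only [Complex.sub_re, Complex.neg_re, Complex.mul_re, Complex.natCast_re,
    Complex.natCast_im, Complex.one_re, Complex.sub_im]
  nlinarith

set_option maxHeartbeats 1000000 in
lemma f_norm_summable (k : ℕ) (hk : 2 ≤ k) {s w : ℂ} (hs : 0 < s.re) (hw : 0 < w.re) :
    Summable (fun y => ‖f k s w y‖) := by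
  set m0 : ℝ := min s.re w.re with hm0
  have hm0pos : 0 < m0 := lt_min hs hw
  set B : ℕ → ℝ := fun p => (p : ℝ) ^ (-(1 + m0)) with hB
  have hBsum : Summable B := Real.summable_nat_rpow.mpr (by linarith)
  have hBnonneg : ∀ p, 0 ≤ B p := fun p => Real.rpow_nonneg (Nat.cast_nonneg p) _
  set C : ℝ := Real.exp (((k : ℝ) - 1) * ∑' n : ℕ, B n) with hC
  set g : ℕ → ℝ := fun y => ‖f k s w y‖ with hg
  have hg1 : g 1 = 1 := by simp [hg, f_one k hk s w]
  have hgmul : ∀ {m n : ℕ}, Nat.Coprime m n → g (m * n) = g m * g n := by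
    intro m n h
    simp [hg, f_mul k s w h, norm_mul]
  have hgsum : ∀ {p : ℕ}, p.Prime → Summable (fun e : ℕ => ‖g (p ^ e)‖) := by
    intro p hp
    apply summable_of_ne_finset_zero (s := Finset.range k)
    intro e he
    simp only [Finset.mem_range, not_lt] at he
    simp [hg, f_prime_pow_eq_zero hp he s w]
  have hfactor : ∀ p : ℕ, p.Prime →
      ∑' e : ℕ, g (p ^ e) ≤ Real.exp (((k : ℝ) - 1) * B p) := by
    intro p hp
    have hset : insert 0 (Finset.Icc 1 (k - 1)) = Finset.range k := by
      ext x
      simp only [Finset.mem_insert, Finset.mem_Icc, Finset.mem_range]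
      omega
    rw [tsum_eq_sum (s := insert 0 (Finset.Icc 1 (k - 1)))
      (fun e he => by
        simp only [hg]
        rw [f_prime_pow_eq_zero hp (by rw [hset] at he; simpa using he) s w, norm_zero])]
    rw [Finset.sum_insert (by simp)]
    have h0 : g (p ^ 0) = 1 := by rw [pow_zero]; exact hg1
    rw [h0]
    have hsumle : ∑ j ∈ Finset.Icc 1 (k - 1), g (p ^ j)
        ≤ ∑ j ∈ Finset.Icc 1 (k - 1), B p :=
      Finset.sum_le_sum fun j hj => norm_f_prime_pow_le hk hp hj hs hw
    have hcard : (Finset.Icc 1 (k - 1)).card = k - 1 := by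
      rw [Nat.card_Icc]; omega
    have hconst : ∑ j ∈ Finset.Icc 1 (k - 1), B p = ((k : ℝ) - 1) * B p := by
      rw [Finset.sum_const, hcard, nsmul_eq_mul]
      congr 1
      push_cast [Nat.cast_sub (by omega : 1 ≤ k)]
      ring
    calc 1 + ∑ j ∈ Finset.Icc 1 (k - 1), g (p ^ j)
        ≤ 1 + ((k : ℝ) - 1) * B p := by rw [← hconst]; linarith
      _ ≤ Real.exp (((k : ℝ) - 1) * B p) := by
          have := Real.add_one_le_exp (((k : ℝ) - 1) * B p)
          linarith
  apply summable_of_sum_range_le (c := C) (fun n => norm_nonneg _)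
  intro n
  obtain ⟨hsummA, hsumA⟩ :=
    EulerProduct.summable_and_hasSum_factoredNumbers_prod_filter_prime_tsum
      (f := g) hg1 hgmul hgsum (Finset.range n)
  set A := Nat.factoredNumbers (Finset.range n) with hA
  have hstep1 : ∑ i ∈ Finset.range n, g i = ∑ i ∈ Finset.range n, Set.indicator A g i := by
    refine Finset.sum_congr rfl fun i hi => ?_
    by_cases hi0 : i = 0
    · subst hi0
      rw [Set.indicator_of_notMem (fun hmem => hmem.1 rfl)]
      simp [hg, f_zero]
    · rw [Set.indicator_of_mem]
      exact ⟨hi0, fun p hpl => Finset.mem_range.mpr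
        (lt_of_le_of_lt (Nat.le_of_dvd (Nat.pos_of_ne_zero hi0)
          (Nat.dvd_of_mem_primeFactorsList hpl)) (Finset.mem_range.mp hi))⟩
  have hindsum : Summable (Set.indicator A g) :=
    (summable_subtype_iff_indicator).mp hsumA.summable
  have hstep2 : ∑ i ∈ Finset.range n, Set.indicator A g i ≤ ∑' i, Set.indicator A g i :=
    Summable.sum_le_tsum _ (fun i _ => Set.indicator_nonneg (fun y _ => norm_nonneg _) i) hindsum
  have hstep3 : ∑' i, Set.indicator A g i
      = ∏ p ∈ (Finset.range n).filter Nat.Prime, ∑' e : ℕ, g (p ^ e) :=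
    (hasSum_subtype_iff_indicator.mp hsumA).tsum_eq
  have hstep4 : ∏ p ∈ (Finset.range n).filter Nat.Prime, ∑' e : ℕ, g (p ^ e) ≤ C := by
    calc ∏ p ∈ (Finset.range n).filter Nat.Prime, ∑' e : ℕ, g (p ^ e)
        ≤ ∏ p ∈ (Finset.range n).filter Nat.Prime, Real.exp (((k : ℝ) - 1) * B p) := by
          refine Finset.prod_le_prod (fun p _ => tsum_nonneg fun e => norm_nonneg _)
            (fun p hp => hfactor p (Finset.mem_filter.mp hp).2)
      _ = Real.exp (∑ p ∈ (Finset.range n).filter Nat.Prime, ((k : ℝ) - 1) * B p) :=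
          (Real.exp_sum _ _).symm
      _ ≤ C := by
          rw [hC]
          apply Real.exp_le_exp.mpr
          rw [← Finset.mul_sum]
          refine mul_le_mul_of_nonneg_left ?_
            (by
              have : (1 : ℝ) ≤ (k : ℝ) := by exact_mod_cast (by omega : 1 ≤ k)
              linarith)
          exact Summable.sum_le_tsum _ (fun i _ => hBnonneg i) hBsum
  calc ∑ i ∈ Finset.range n, g i ≤ ∑' i, Set.indicator A g i := by
        rw [hstep1]; exact hstep2
    _ ≤ C := by rw [hstep3]; exact hstep4

lemma hasProd_inv {ι : Type*} {g : ι → ℂ} {a : ℂ} (h : HasProd g a) (ha : a ≠ 0) :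
    HasProd (fun i => (g i)⁻¹) a⁻¹ := by
  have ht := (Filter.Tendsto.comp ((continuousAt_inv₀ ha).tendsto) h)
  simpa [HasProd, Function.comp_def, Finset.prod_inv_distrib] using ht

lemma re_exponent {k j : ℕ} (s w : ℂ) (hj : j ∈ Finset.Icc 1 (k - 1)) (hk : 2 ≤ k)
    (hs : 0 < s.re) (hw : 0 < w.re) :
    1 < (((k : ℂ) - (j : ℂ)) * s + (j : ℂ) * w + 1).re := by
  rw [Finset.mem_Icc] at hj
  have h1 : (1 : ℝ) ≤ (j : ℝ) := by exact_mod_cast hj.1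
  have h2 : (j : ℝ) + 1 ≤ (k : ℝ) := by exact_mod_cast (by omega : j + 1 ≤ k)
  simp only [Complex.add_re, Complex.mul_re, Complex.sub_re, Complex.sub_im,
    Complex.natCast_re, Complex.natCast_im, Complex.one_re]
  nlinarith

end MK

open MK in
theorem M_eq_K_times_zetas (k : ℕ) (hk : 2 ≤ k) (s w : ℂ)
    (hs : 0 < s.re) (hw : 0 < w.re) :
    ∃ K : ℂ,
      HasProd (fun p : Nat.Primes =>
        (1 + ∑ j ∈ Finset.Icc 1 (k - 1),
            (((p : ℕ) : ℂ)) ^ (-(((k : ℂ) - (j : ℂ)) * s) - (j : ℂ) * w - 1)) *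
          ∏ j ∈ Finset.Icc 1 (k - 1),
            (1 - (((p : ℕ) : ℂ)) ^ (-(((k : ℂ) - (j : ℂ)) * s) - (j : ℂ) * w - 1))) K ∧
      HasSum (fun y : ℕ =>
        if 0 < y ∧ ∀ p : ℕ, p.Prime → ¬ p ^ k ∣ y then
          (y : ℂ) ^ (s - w) * ((radical y : ℕ) : ℂ) ^ (-(k : ℂ) * s - 1)
        else 0)
        (K * ∏ j ∈ Finset.Icc 1 (k - 1),
          riemannZeta (((k : ℂ) - (j : ℂ)) * s + (j : ℂ) * w + 1)) := by
  have hsum := f_norm_summable k hk hs hw (s := s) (w := w)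
  have hZ : ∀ j ∈ Finset.Icc 1 (k - 1),
      HasProd (fun p : Nat.Primes =>
          (1 - ((p : ℕ) : ℂ) ^ (-(((k : ℂ) - (j : ℂ)) * s) - (j : ℂ) * w - 1)))
        (riemannZeta (((k : ℂ) - (j : ℂ)) * s + (j : ℂ) * w + 1))⁻¹ := by
    intro j hj
    have h1 := riemannZeta_eulerProduct_hasProd (re_exponent s w hj hk hs hw)
    have hne := riemannZeta_ne_zero_of_one_lt_re (re_exponent s w hj hk hs hw)
    have h2 := hasProd_inv h1 hne
    simp only [inv_inv] at h2
    convert h2 using 2 with p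
    congr 1
    ring_nf
  have hProdZeta := hasProd_prod hZ
  have hEuler := EulerProduct.eulerProduct_hasProd (f := f k s w) (f_one k hk s w)
    (fun {m n} h => f_mul k s w h) hsum (f_zero k s w)
  rw [show (fun p : Nat.Primes => ∑' e : ℕ, f k s w ((p : ℕ) ^ e))
      = fun p : Nat.Primes => 1 + ∑ j ∈ Finset.Icc 1 (k - 1),
          ((p : ℕ) : ℂ) ^ (-(((k : ℂ) - (j : ℂ)) * s) - (j : ℂ) * w - 1)
    from funext fun p => euler_factor hk p.2 s w] at hEuler
  refine ⟨(∑' y, f k s w y) * ∏ j ∈ Finset.Icc 1 (k - 1),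
      (riemannZeta (((k : ℂ) - (j : ℂ)) * s + (j : ℂ) * w + 1))⁻¹, hEuler.mul hProdZeta, ?_⟩
  have hT : HasSum (f k s w) (∑' y, f k s w y) := hsum.of_norm.hasSum
  have hKmul : (∑' y, f k s w y) * (∏ j ∈ Finset.Icc 1 (k - 1),
        (riemannZeta (((k : ℂ) - (j : ℂ)) * s + (j : ℂ) * w + 1))⁻¹)
      * ∏ j ∈ Finset.Icc 1 (k - 1),
          riemannZeta (((k : ℂ) - (j : ℂ)) * s + (j : ℂ) * w + 1) = ∑' y, f k s w y := by
    rw [mul_assoc, ← Finset.prod_mul_distrib]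
    rw [Finset.prod_congr rfl (fun j hj => inv_mul_cancel₀
      (riemannZeta_ne_zero_of_one_lt_re (re_exponent s w hj hk hs hw)))]
    simp
  rw [hKmul]
  exact hT
end
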